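/- arXiv:2103.01723 — 3 statements merged into one kernel-verified Lean document; each statement's English description precedes it below -/
import Mathlib

section
/- Let n ≥ 1, 0 < s < 1, 1 ≤ p < ∞ and f ∈ W^{s,p}(ℝⁿ). Then lim_{ε→0⁺} ε^{−s} ‖f_ε − f‖_{L^p(ℝⁿ)} = 0, where f_ε := f ∗ φ_ε is the mollification of f; i.e., ‖f_ε − f‖_{L^p(ℝⁿ)} = o(ε^s). -/
open MeasureTheory Metric Set Filter Topology
open scoped ENNReal

noncomputable section

/-- Euclidean n-space. -/
abbrev Rn (n : ℕ) : Type := EuclideanSpace ℝ (Fin n)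

/-- The i-th standard basis vector. -/
def eVec (n : ℕ) (i : Fin n) : Rn n := EuclideanSpace.single i 1

/-- Partial derivative in the i-th coordinate direction. -/
def pderiv' {n : ℕ} {E : Type} [NormedAddCommGroup E] [NormedSpace ℝ E]
    (i : Fin n) (f : Rn n → E) (x : Rn n) : E :=
  fderiv ℝ f x (eVec n i)

/-- A smooth compactly supported test function with support inside Ω. -/
def IsTestFun {n : ℕ} (Ω : Set (Rn n)) (φ : Rn n → ℝ) : Prop :=
  ContDiff ℝ (⊤ : ℕ∞) φ ∧ HasCompactSupport φ ∧ tsupport φ ⊆ Ω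

/-- The Gagliardo fractional seminorm [f]_{W^{s,p}(Ω)} (valued in ℝ≥0∞). -/
def gagliardo {n : ℕ} {E : Type} [NormedAddCommGroup E]
    (s p : ℝ) (Ω : Set (Rn n)) (f : Rn n → E) : ℝ≥0∞ :=
  (∫⁻ x in Ω, ∫⁻ y in Ω,
    ENNReal.ofReal (‖f x - f y‖ ^ p / ‖x - y‖ ^ ((n : ℝ) + s * p))) ^ (1 / p)

/-- Membership in the fractional Sobolev space W^{s,p}(Ω):
f ∈ L^p(Ω) with finite Gagliardo seminorm. -/
def MemWsp {n : ℕ} {E : Type} [NormedAddCommGroup E]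
    (s p : ℝ) (Ω : Set (Rn n)) (f : Rn n → E) : Prop :=
  MemLp f (ENNReal.ofReal p) (volume.restrict Ω) ∧ gagliardo s p Ω f < ⊤

/-- A standard mollifier: smooth, supported in the closed unit ball, nonnegative,
with total integral 1. -/
structure IsMollifier {n : ℕ} (ψ : Rn n → ℝ) : Prop where
  smooth : ContDiff ℝ (⊤ : ℕ∞) ψ
  supp : tsupport ψ ⊆ Metric.closedBall 0 1
  nonneg : ∀ x, 0 ≤ ψ x
  integral_one : ∫ x, ψ x = 1

/-- Mollification f ∗ ψ_ε, where ψ_ε(z) := ε^{-n} ψ(z/ε). -/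
def mollify {n : ℕ} {E : Type} [NormedAddCommGroup E] [NormedSpace ℝ E]
    (ψ : Rn n → ℝ) (ε : ℝ) (f : Rn n → E) (x : Rn n) : E :=
  ∫ z, ((ε ^ n)⁻¹ * ψ (ε⁻¹ • z)) • f (x - z)

/-- Mollification of the extension of f by zero outside Ω. -/
def mollifyOn {n : ℕ} {E : Type} [NormedAddCommGroup E] [NormedSpace ℝ E]
    (Ω : Set (Rn n)) (ψ : Rn n → ℝ) (ε : ℝ) (f : Rn n → E) : Rn n → E :=
  mollify ψ ε (Ω.indicator f)

/-- Pointwise Jacobian determinant of a map ℝ² → ℝ². -/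
def jacDet2 (g : Rn 2 → Rn 2) (x : Rn 2) : ℝ :=
  pderiv' 0 (fun y => g y 0) x * pderiv' 1 (fun y => g y 1) x -
  pderiv' 1 (fun y => g y 0) x * pderiv' 0 (fun y => g y 1) x

/-- Pointwise Jacobian determinant of a map ℝⁿ → ℝⁿ. -/
def jacDetN {n : ℕ} (g : Rn n → Rn n) (x : Rn n) : ℝ :=
  (Matrix.of fun i j : Fin n => pderiv' j (fun y => g y i) x).det

/-- The Jacobian matrix ∇v of a map ℝ² → ℝ³ (3×2 matrix of partial derivatives). -/
def gradMat (v : Rn 2 → Rn 3) (x : Rn 2) : Matrix (Fin 3) (Fin 2) ℝ :=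
  Matrix.of fun m j => pderiv' j (fun y => v y m) x

/-- The pullback metric (∇v)ᵀ ∇v. -/
def pullbackMetric (v : Rn 2 → Rn 3) (x : Rn 2) : Matrix (Fin 2) (Fin 2) ℝ :=
  Matrix.transpose (gradMat v x) * gradMat v x

/-- Cross product in ℝ³. -/
def cross3 (a b : Rn 3) : Rn 3 :=
  (EuclideanSpace.equiv (Fin 3) ℝ).symm
    ![a 1 * b 2 - a 2 * b 1, a 2 * b 0 - a 0 * b 2, a 0 * b 1 - a 1 * b 0]

/-- Unit normal of an immersion ℝ² → ℝ³. -/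
def unitNormal (v : Rn 2 → Rn 3) (x : Rn 2) : Rn 3 :=
  ‖cross3 (pderiv' 0 v x) (pderiv' 1 v x)‖⁻¹ • cross3 (pderiv' 0 v x) (pderiv' 1 v x)

/-- Second fundamental form II_{ij} = ∂_{ij} v · n of an immersion ℝ² → ℝ³. -/
def secondFF (v : Rn 2 → Rn 3) (i j : Fin 2) (x : Rn 2) : ℝ :=
  inner ℝ (pderiv' i (fun y => pderiv' j v y) x) (unitNormal v x)

/-- F(ε) = o(ε^t) as ε → 0⁺ (with F valued in ℝ≥0∞). -/
def LittleO (F : ℝ → ℝ≥0∞) (t : ℝ) : Prop :=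
  Tendsto (fun ε => F ε / ENNReal.ofReal (ε ^ t)) (𝓝[>] (0:ℝ)) (𝓝 0)

/-- f belongs locally (on Ω) to the little Hölder space c^{0,α}: around every point
there is a ball on which f can be approximated arbitrarily well by smooth functions
in the C^{0,α} norm. -/
def LittleHolderLocOn {n : ℕ} {E : Type} [NormedAddCommGroup E] [NormedSpace ℝ E]
    (α : ℝ) (f : Rn n → E) (Ω : Set (Rn n)) : Prop :=
  ∀ x ∈ Ω, ∃ r > 0, ball x r ⊆ Ω ∧
    ∀ δ > 0, ∃ g : Rn n → E, ContDiff ℝ (⊤ : ℕ∞) g ∧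
      (∀ y ∈ ball x r, ‖f y - g y‖ ≤ δ) ∧
      ∀ y ∈ ball x r, ∀ z ∈ ball x r, ‖(f y - g y) - (f z - g z)‖ ≤ δ * ‖y - z‖ ^ α

/-- The line through x with direction d. -/
def lineThrough {n : ℕ} (x d : Rn n) : Set (Rn n) := {y | ∃ t : ℝ, y = x + t • d}

/-- g is the weak (distributional) i-th partial derivative of f on Ω. -/
def IsWeakDerivOn {n : ℕ} (Ω : Set (Rn n)) (i : Fin n) (f g : Rn n → ℝ) : Prop :=
  ∀ φ : Rn n → ℝ, IsTestFun Ω φ →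
    ∫ x in Ω, f x * pderiv' i φ x = - ∫ x in Ω, g x * φ x

/-- A bounded smooth domain: a bounded open sublevel set of a smooth function whose
gradient does not vanish on the boundary. -/
def IsSmoothBoundedDomain {n : ℕ} (Ω : Set (Rn n)) : Prop :=
  IsOpen Ω ∧ Bornology.IsBounded Ω ∧ ∃ F : Rn n → ℝ, ContDiff ℝ (⊤ : ℕ∞) F ∧
    Ω = {x | F x < 0} ∧ ∀ x ∈ frontier Ω, fderiv ℝ F x ≠ 0

private lemma jensen_aux {α : Type*} [MeasurableSpace α] (μ : Measure α)
    {p : ℝ} (hp : 1 ≤ p) {w h : α → ℝ≥0∞}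
    (hw : AEMeasurable w μ) (hh : AEMeasurable h μ)
    (hw1 : ∫⁻ a, w a ∂μ = 1) :
    (∫⁻ a, w a * h a ∂μ) ^ p ≤ ∫⁻ a, w a * h a ^ p ∂μ := by
  rcases eq_or_lt_of_le hp with hp1 | hp1
  · simp [← hp1]
  · have hp0 : (0:ℝ) < p := lt_trans one_pos hp1
    set q : ℝ := p / (p - 1) with hqdef
    have hpq : p.HolderConjugate q := Real.HolderConjugate.conjExponent hp1
    have key := ENNReal.lintegral_mul_le_Lp_mul_Lq μ hpq
      ((hw.pow_const (1/p)).mul hh) (hw.pow_const (1/q))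
    have e1 : ∀ a, ((fun a => w a ^ (1/p) * h a) * fun a => w a ^ (1/q)) a = w a * h a := by
      intro a
      have e : w a ^ (1/p) * w a ^ (1/q) = w a := by
        rw [← ENNReal.rpow_add_of_nonneg _ _ hpq.one_div_nonneg hpq.symm.one_div_nonneg,
          one_div, one_div, hpq.inv_add_inv_eq_one, ENNReal.rpow_one]
      simp only [Pi.mul_apply]
      rw [mul_right_comm, e]
    have e2 : ∀ a, (w a ^ (1/p) * h a) ^ p = w a * h a ^ p := by
      intro a
      rw [ENNReal.mul_rpow_of_nonneg _ _ hp0.le, ← ENNReal.rpow_mul,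
        one_div_mul_cancel hp0.ne', ENNReal.rpow_one]
    have e3 : ∀ a, (w a ^ (1/q)) ^ q = w a := by
      intro a
      rw [← ENNReal.rpow_mul, one_div_mul_cancel hpq.symm.ne_zero, ENNReal.rpow_one]
    simp only [Pi.mul_apply] at key e1
    simp only [e1, e2, e3] at key
    rw [hw1, ENNReal.one_rpow, mul_one] at key
    calc (∫⁻ a, w a * h a ∂μ) ^ p ≤ ((∫⁻ a, w a * h a ^ p ∂μ) ^ (1/p)) ^ p :=
          ENNReal.rpow_le_rpow key hp0.le
      _ = ∫⁻ a, w a * h a ^ p ∂μ := by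
          rw [← ENNReal.rpow_mul, one_div_mul_cancel hp0.ne', ENNReal.rpow_one]

/-- For f ∈ W^{s,p}(ℝⁿ), ‖f_ε − f‖_{L^p} = o(ε^s) as ε → 0⁺. -/
theorem mollification_Lp_rate
    {n : ℕ} (hn : 1 ≤ n) {s p : ℝ} (hs1 : 0 < s) (hs2 : s < 1) (hp : 1 ≤ p)
    (f : Rn n → ℝ) (hf : MemWsp s p Set.univ f)
    (ψ : Rn n → ℝ) (hψ : IsMollifier ψ) :
    LittleO (fun ε =>
      eLpNorm (fun x => mollify ψ ε f x - f x) (ENNReal.ofReal p) volume) s := by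
  classical
  have hp0 : (0:ℝ) < p := lt_of_lt_of_le one_pos hp
  have hq0 : (ENNReal.ofReal p) ≠ 0 := by
    simp [ENNReal.ofReal_eq_zero, not_le, hp0]
  have hqt : (ENNReal.ofReal p) ≠ ⊤ := ENNReal.ofReal_ne_top
  have hqr : (ENNReal.ofReal p).toReal = p := ENNReal.toReal_ofReal hp0.le
  haveI : Nonempty (Fin n) := ⟨⟨0, hn⟩⟩
  haveI : Nontrivial (Rn n) := inferInstance
  have hnpos : (0:ℝ) < n := by exact_mod_cast lt_of_lt_of_le zero_lt_one (by exact_mod_cast hn)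
  set β : ℝ := (n:ℝ) + s * p with hβdef
  have hβpos : 0 < β := by
    have : 0 < s * p := mul_pos hs1 hp0
    simp only [hβdef]; linarith
  obtain ⟨hfLp, hfG⟩ := hf
  rw [Measure.restrict_univ] at hfLp
  have hfaesm : AEStronglyMeasurable f volume := hfLp.1
  set g : Rn n → ℝ := hfaesm.mk f with hgdef
  have hgsm : StronglyMeasurable g := hfaesm.stronglyMeasurable_mk
  have hgm : Measurable g := hgsm.measurable
  have hae : f =ᵐ[volume] g := hfaesm.ae_eq_mk
  have hgLp : MemLp g (ENNReal.ofReal p) volume := hfLp.ae_eq hae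
  -- mollification only depends on the a.e. class
  have hmol : ∀ (ε : ℝ) (x : Rn n), mollify ψ ε f x = mollify ψ ε g x := by
    intro ε x
    apply integral_congr_ae
    have hqmp : Measure.QuasiMeasurePreserving (fun z : Rn n => x - z) volume volume :=
      (Measure.measurePreserving_sub_left volume x).quasiMeasurePreserving
    filter_upwards [hqmp.ae_eq hae] with z hz
    simp only [Function.comp] at hz
    rw [hz]
  have hTeq : (fun ε => eLpNorm (fun x => mollify ψ ε f x - f x) (ENNReal.ofReal p) volume)
      = fun ε => eLpNorm (fun x => mollify ψ ε g x - g x) (ENNReal.ofReal p) volume := by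
    funext ε
    apply eLpNorm_congr_ae
    filter_upwards [hae] with x hx
    rw [hmol ε x, hx]
  -- finiteness of the (translated) Gagliardo energy
  have hG' : (∫⁻ x, ∫⁻ y, ENNReal.ofReal (‖f x - f y‖ ^ p / ‖x - y‖ ^ β) ∂volume ∂volume) < ⊤ := by
    have h := hfG
    unfold gagliardo at h
    simp only [Measure.restrict_univ] at h
    exact (ENNReal.rpow_lt_top_iff_of_pos (by positivity)).mp h
  have hJ : (∫⁻ x, ∫⁻ y, ENNReal.ofReal (‖g x - g y‖ ^ p / ‖x - y‖ ^ β) ∂volume ∂volume) < ⊤ := by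
    refine lt_of_eq_of_lt ?_ hG'
    apply lintegral_congr_ae
    filter_upwards [hae] with x hx
    apply lintegral_congr_ae
    filter_upwards [hae] with y hy
    rw [hx, hy]
  set D : Rn n → ℝ≥0∞ := fun z => ∫⁻ x, (‖g (x - z) - g x‖₊ : ℝ≥0∞) ^ p with hDdef
  set h₀ : Rn n → ℝ≥0∞ := fun z => D z / ENNReal.ofReal (‖z‖ ^ β) with hh₀def
  have hprodm : Measurable (fun q : Rn n × Rn n => (‖g (q.1 - q.2) - g q.1‖₊ : ℝ≥0∞) ^ p) := by
    apply Measurable.pow_const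
    exact ((hgm.comp (measurable_fst.sub measurable_snd)).sub
      (hgm.comp measurable_fst)).nnnorm.coe_nnreal_ennreal
  have hDm : Measurable D :=
    Measurable.lintegral_prod_left (f := fun x z => (‖g (x - z) - g x‖₊ : ℝ≥0∞) ^ p) hprodm
  have hzm : Measurable (fun z : Rn n => ENNReal.ofReal (‖z‖ ^ β)) :=
    ENNReal.measurable_ofReal.comp (measurable_norm.pow_const β)
  have hh₀m : Measurable h₀ := hDm.div hzm
  have hne : ∀ᵐ z : Rn n ∂volume, z ≠ 0 := by
    rw [ae_iff]
    simpa using measure_singleton (0 : Rn n)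
  -- I : the total weighted energy is finite
  have hI : (∫⁻ z, h₀ z ∂volume) < ⊤ := by
    have step1 : ∀ x : Rn n, (∫⁻ y, ENNReal.ofReal (‖g x - g y‖ ^ p / ‖x - y‖ ^ β) ∂volume)
        = ∫⁻ z, ENNReal.ofReal (‖g x - g (x - z)‖ ^ p / ‖z‖ ^ β) ∂volume := by
      intro x
      have hmeasy : Measurable (fun y : Rn n => ENNReal.ofReal (‖g x - g y‖ ^ p / ‖x - y‖ ^ β)) := by
        apply ENNReal.measurable_ofReal.comp
        apply Measurable.div
        · exact ((measurable_const.sub hgm).norm.pow_const p)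
        · exact ((measurable_const.sub measurable_id).norm.pow_const β)
      have := (Measure.measurePreserving_sub_left volume x).lintegral_comp hmeasy
      rw [← this]
      apply lintegral_congr
      intro z
      simp [sub_sub_cancel]
    have step2 : (∫⁻ x, ∫⁻ y, ENNReal.ofReal (‖g x - g y‖ ^ p / ‖x - y‖ ^ β) ∂volume ∂volume)
        = ∫⁻ z, ∫⁻ x, ENNReal.ofReal (‖g x - g (x - z)‖ ^ p / ‖z‖ ^ β) ∂volume ∂volume := by
      rw [lintegral_congr step1]
      apply lintegral_lintegral_swap
      apply Measurable.aemeasurable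
      apply ENNReal.measurable_ofReal.comp
      apply Measurable.div
      · exact (((hgm.comp measurable_fst).sub
          (hgm.comp (measurable_fst.sub measurable_snd))).norm.pow_const p)
      · exact ((measurable_snd.norm).pow_const β)
    have step3 : (∫⁻ z, h₀ z ∂volume)
        = ∫⁻ z, ∫⁻ x, ENNReal.ofReal (‖g x - g (x - z)‖ ^ p / ‖z‖ ^ β) ∂volume ∂volume := by
      apply lintegral_congr_ae
      filter_upwards [hne] with z hz
      have hzn : (0:ℝ) < ‖z‖ ^ β := Real.rpow_pos_of_pos (norm_pos_iff.mpr hz) β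
      have e : ∀ x : Rn n, ENNReal.ofReal (‖g x - g (x - z)‖ ^ p / ‖z‖ ^ β)
          = (‖g (x - z) - g x‖₊ : ℝ≥0∞) ^ p * (ENNReal.ofReal (‖z‖ ^ β))⁻¹ := by
        intro x
        rw [ENNReal.ofReal_div_of_pos hzn, norm_sub_rev (g x), div_eq_mul_inv]
        congr 1
        rw [← ENNReal.ofReal_rpow_of_nonneg (norm_nonneg _) hp0.le, ofReal_norm, enorm_eq_nnnorm]
      rw [lintegral_congr e, lintegral_mul_const' _ _
        (ENNReal.inv_ne_top.mpr (ne_of_gt (ENNReal.ofReal_pos.mpr hzn)))]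
      simp [hh₀def, hDdef, div_eq_mul_inv]
    rw [step3, ← step2]
    exact hJ
  -- K tends to zero
  set K : ℝ → ℝ≥0∞ := fun ε => ∫⁻ z in closedBall (0 : Rn n) ε, h₀ z ∂volume with hKdef
  have hK0 : Tendsto K (𝓝[>] (0:ℝ)) (𝓝 0) := by
    set ν : Measure (Rn n) := volume.withDensity h₀ with hνdef
    have hνapp : ∀ s : Set (Rn n), MeasurableSet s → ν s = ∫⁻ z in s, h₀ z ∂volume :=
      fun s hs => withDensity_apply h₀ hs
    have hν0 : Tendsto (fun k : ℕ => ν (closedBall 0 (1 / (k+1)))) atTop (𝓝 0) := by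
      have h1 : (⋂ k : ℕ, closedBall (0:Rn n) (1/(k+1))) = {0} := by
        ext z
        simp only [mem_iInter, mem_closedBall, dist_zero_right, mem_singleton_iff]
        constructor
        · intro hz
          have h2 : ‖z‖ ≤ 0 :=
            ge_of_tendsto' tendsto_one_div_add_atTop_nhds_zero_nat (fun k => hz k)
          simpa using norm_le_zero_iff.mp h2
        · rintro rfl k
          simp only [norm_zero]
          positivity
      have h2 : ν {0} = 0 := by
        rw [hνapp _ (measurableSet_singleton 0)]
        exact setLIntegral_measure_zero _ _ (measure_singleton 0)
      have h3 := tendsto_measure_iInter_atTop (μ := ν)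
        (s := fun k : ℕ => closedBall (0:Rn n) (1/(k+1)))
        (fun k => measurableSet_closedBall.nullMeasurableSet)
        (fun i j hij => closedBall_subset_closedBall (by
          apply div_le_div_of_nonneg_left one_pos.le (by positivity)
          exact_mod_cast add_le_add_left (Nat.cast_le.mpr hij) 1))
        ⟨0, by
          rw [hνapp _ measurableSet_closedBall]
          exact ne_of_lt (lt_of_le_of_lt (setLIntegral_le_lintegral _ _) hI)⟩
      rw [h1] at h3
      simpa [Function.comp_def, h2] using h3
    rw [ENNReal.tendsto_nhds_zero]
    intro δ hδ
    obtain ⟨k, hk⟩ := (ENNReal.tendsto_nhds_zero.mp hν0 δ hδ).exists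
    have hc : (0:ℝ) < 1/(k+1) := by positivity
    filter_upwards [Ioc_mem_nhdsGT_of_mem
      (show (0:ℝ) ∈ Ico (0:ℝ) (1/((k:ℝ)+1)) from ⟨le_refl _, hc⟩)] with ε hε
    calc K ε = ν (closedBall 0 ε) := (hνapp _ measurableSet_closedBall).symm
      _ ≤ ν (closedBall 0 (1/(k+1))) := measure_mono (closedBall_subset_closedBall hε.2)
      _ ≤ δ := hk
  -- the bound for ψ
  have hψHCS : HasCompactSupport ψ :=
    IsCompact.of_isClosed_subset (isCompact_closedBall 0 1) (isClosed_tsupport ψ) hψ.supp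
  obtain ⟨Cψ, hCψ⟩ := hψHCS.exists_bound_of_continuous hψ.smooth.continuous
  have hCψ0 : 0 ≤ Cψ := le_trans (norm_nonneg _) (hCψ 0)
  set C : ℝ≥0∞ := ENNReal.ofReal Cψ with hCdef
  -- main quantitative bound
  have hbound : ∀ ε : ℝ, 0 < ε →
      eLpNorm (fun x => mollify ψ ε g x - g x) (ENNReal.ofReal p) volume
        ≤ (C * K ε) ^ (1/p) * ENNReal.ofReal (ε ^ s) := by
    intro ε hε
    set w : Rn n → ℝ := fun z => (ε^n)⁻¹ * ψ (ε⁻¹ • z) with hwdef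
    have hεn : (0:ℝ) < ε ^ n := pow_pos hε n
    have hwnn : ∀ z, 0 ≤ w z := fun z => mul_nonneg (inv_nonneg.mpr hεn.le) (hψ.nonneg _)
    have hwcont : Continuous w :=
      continuous_const.mul (hψ.smooth.continuous.comp (continuous_const_smul _))
    have hwm : Measurable w := hwcont.measurable
    have hwsupp : ∀ z : Rn n, z ∉ closedBall (0:Rn n) ε → w z = 0 := by
      intro z hz
      have h1 : ψ (ε⁻¹ • z) = 0 := by
        by_contra h
        apply hz
        have h2 : ε⁻¹ • z ∈ tsupport ψ := subset_closure (by exact h)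
        have h3 := hψ.supp h2
        rw [mem_closedBall, dist_zero_right] at h3
        rw [norm_smul, norm_inv, Real.norm_eq_abs, abs_of_pos hε] at h3
        rw [mem_closedBall, dist_zero_right]
        calc ‖z‖ = ε * (ε⁻¹ * ‖z‖) := by field_simp
          _ ≤ ε * 1 := by nlinarith [norm_nonneg z]
          _ = ε := mul_one ε
      simp [hwdef, h1]
    have hwHCS : HasCompactSupport w :=
      HasCompactSupport.intro (isCompact_closedBall 0 ε) hwsupp
    have hwint : Integrable w volume := hwcont.integrable_of_hasCompactSupport hwHCS
    have hwone : (∫ z, w z ∂volume) = 1 := by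
      have h1 := MeasureTheory.Measure.integral_comp_smul (volume : Measure (Rn n)) ψ ε⁻¹
      simp only [finrank_euclideanSpace_fin, hψ.integral_one, smul_eq_mul, mul_one] at h1
      have h2 : |((ε⁻¹ ^ n)⁻¹ : ℝ)| = ε ^ n := by
        rw [← inv_pow, inv_inv, abs_of_pos hεn]
      rw [hwdef]
      simp only
      rw [MeasureTheory.integral_const_mul, h1, h2]
      field_simp
    have hW1 : (∫⁻ z, ENNReal.ofReal (w z) ∂volume) = 1 := by
      rw [← ofReal_integral_eq_lintegral_ofReal hwint (Eventually.of_forall hwnn), hwone,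
        ENNReal.ofReal_one]
    haveI : IsFiniteMeasure (volume.restrict (closedBall (0:Rn n) ε)) :=
      ⟨by rw [Measure.restrict_apply_univ]; exact measure_closedBall_lt_top⟩
    have hgloc : ∀ x : Rn n, Integrable (fun z => w z • g (x - z)) volume := by
      intro x
      have h1 : MemLp (fun z : Rn n => g (x - z)) (ENNReal.ofReal p) volume :=
        hgLp.comp_measurePreserving (Measure.measurePreserving_sub_left volume x)
      have h2 : Integrable (fun z : Rn n => g (x - z))
          (volume.restrict (closedBall (0:Rn n) ε)) :=
        (h1.restrict _).integrable (by exact_mod_cast ENNReal.one_le_ofReal.mpr hp)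
      have h3 : Integrable (fun z => w z • g (x - z)) (volume.restrict (closedBall (0:Rn n) ε)) := by
        simp_rw [smul_eq_mul]
        exact h2.bdd_mul hwcont.aestronglyMeasurable (ae_of_all _ (hwHCS.exists_bound_of_continuous hwcont).choose_spec)
      have h4 : (fun z => w z • g (x - z))
          = (closedBall (0:Rn n) ε).indicator (fun z => w z • g (x - z)) := by
        funext z
        by_cases hz : z ∈ closedBall (0:Rn n) ε
        · rw [indicator_of_mem hz]
        · rw [indicator_of_notMem hz, hwsupp z hz, zero_smul]
      rw [h4, integrable_indicator_iff measurableSet_closedBall]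
      exact h3
    -- pointwise estimate
    have hptw : ∀ x : Rn n, (‖mollify ψ ε g x - g x‖₊ : ℝ≥0∞) ^ p
        ≤ ∫⁻ z, ENNReal.ofReal (w z) * (‖g (x - z) - g x‖₊ : ℝ≥0∞) ^ p ∂volume := by
      intro x
      have hrep : mollify ψ ε g x - g x = ∫ z, w z • (g (x - z) - g x) ∂volume := by
        have e1 : (∫ z, w z • (g (x - z) - g x) ∂volume)
            = (∫ z, w z • g (x - z) ∂volume) - ∫ z, w z • g x ∂volume := by
          simp_rw [smul_sub]
          exact integral_sub (hgloc x) (hwint.smul_const (g x))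
        have e2 : (∫ z, w z • g x ∂volume) = g x := by
          rw [integral_smul_const, hwone, one_smul]
        rw [e1, e2]
        rfl
      have hnorm : (‖mollify ψ ε g x - g x‖₊ : ℝ≥0∞)
          ≤ ∫⁻ z, ENNReal.ofReal (w z) * (‖g (x - z) - g x‖₊ : ℝ≥0∞) ∂volume := by
        rw [hrep]
        refine le_trans (enorm_integral_le_lintegral_enorm _)
          (le_of_eq (lintegral_congr fun z => ?_))
        rw [← ofReal_norm, norm_smul, Real.norm_eq_abs, abs_of_nonneg (hwnn z),
          ENNReal.ofReal_mul (hwnn z), ofReal_norm, enorm_eq_nnnorm]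
      have hhm : AEMeasurable (fun z : Rn n => (‖g (x - z) - g x‖₊ : ℝ≥0∞)) volume :=
        (((hgm.comp (measurable_const.sub measurable_id)).sub
          measurable_const).nnnorm.coe_nnreal_ennreal).aemeasurable
      calc (‖mollify ψ ε g x - g x‖₊ : ℝ≥0∞) ^ p
          ≤ (∫⁻ z, ENNReal.ofReal (w z) * (‖g (x - z) - g x‖₊ : ℝ≥0∞) ∂volume) ^ p :=
            ENNReal.rpow_le_rpow hnorm hp0.le
        _ ≤ _ := jensen_aux volume hp (ENNReal.measurable_ofReal.comp hwm).aemeasurable hhm hW1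
    -- integrate and swap
    have hWDm : Measurable (fun q : Rn n × Rn n =>
        ENNReal.ofReal (w q.2) * (‖g (q.1 - q.2) - g q.1‖₊ : ℝ≥0∞) ^ p) :=
      ((ENNReal.measurable_ofReal.comp hwm).comp measurable_snd).mul hprodm
    have hmain : (∫⁻ x, (‖mollify ψ ε g x - g x‖₊ : ℝ≥0∞) ^ p ∂volume)
        ≤ C * ENNReal.ofReal (ε ^ (s*p)) * K ε := by
      calc (∫⁻ x, (‖mollify ψ ε g x - g x‖₊ : ℝ≥0∞) ^ p ∂volume)
          ≤ ∫⁻ x, ∫⁻ z, ENNReal.ofReal (w z) * (‖g (x - z) - g x‖₊ : ℝ≥0∞) ^ p ∂volume ∂volume :=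
            lintegral_mono hptw
        _ = ∫⁻ z, ∫⁻ x, ENNReal.ofReal (w z) * (‖g (x - z) - g x‖₊ : ℝ≥0∞) ^ p ∂volume ∂volume :=
            lintegral_lintegral_swap hWDm.aemeasurable
        _ = ∫⁻ z, ENNReal.ofReal (w z) * D z ∂volume :=
            lintegral_congr fun z => lintegral_const_mul' _ _ ENNReal.ofReal_ne_top
        _ = ∫⁻ z in closedBall (0:Rn n) ε, ENNReal.ofReal (w z) * D z ∂volume := by
            rw [← lintegral_indicator measurableSet_closedBall]
            apply lintegral_congr
            intro z
            by_cases hz : z ∈ closedBall (0:Rn n) ε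
            · rw [indicator_of_mem hz]
            · rw [indicator_of_notMem hz, hwsupp z hz]
              simp
        _ ≤ ∫⁻ z in closedBall (0:Rn n) ε, (C * ENNReal.ofReal (ε ^ (s*p))) * h₀ z ∂volume := by
            apply lintegral_mono_ae
            filter_upwards [ae_restrict_mem measurableSet_closedBall, ae_restrict_of_ae hne]
              with z hz hz0
            have hz' : (0:ℝ) < ‖z‖ := norm_pos_iff.mpr hz0
            have hzε : ‖z‖ ≤ ε := by simpa [dist_zero_right] using hz
            have hreal : w z ≤ Cψ * (ε ^ (s*p) / ‖z‖ ^ β) := by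
              have h1 : w z ≤ (ε^n)⁻¹ * Cψ := by
                apply mul_le_mul_of_nonneg_left _ (inv_nonneg.mpr hεn.le)
                exact le_trans (le_abs_self _) (hCψ _)
              refine le_trans h1 ?_
              rw [mul_comm]
              apply mul_le_mul_of_nonneg_left _ hCψ0
              have hεpow : ((ε^n)⁻¹ : ℝ) = ε ^ (s*p) / ε ^ β := by
                rw [← Real.rpow_natCast ε n, ← Real.rpow_sub hε, ← Real.rpow_neg hε.le]
                congr 1
                simp only [hβdef]
                ring
              rw [hεpow]
              apply div_le_div_of_nonneg_left _ _ _
              · positivity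
              · exact Real.rpow_pos_of_pos hz' β
              · exact Real.rpow_le_rpow (norm_nonneg z) hzε hβpos.le
            calc ENNReal.ofReal (w z) * D z
                ≤ ENNReal.ofReal (Cψ * (ε ^ (s*p) / ‖z‖ ^ β)) * D z :=
                  mul_le_mul_left (ENNReal.ofReal_le_ofReal hreal) _
              _ = (C * ENNReal.ofReal (ε ^ (s*p))) * h₀ z := by
                  rw [ENNReal.ofReal_mul hCψ0,
                    ENNReal.ofReal_div_of_pos (Real.rpow_pos_of_pos hz' β), hh₀def]
                  simp only [div_eq_mul_inv]
                  ring
        _ = (C * ENNReal.ofReal (ε ^ (s*p))) * K ε :=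
            lintegral_const_mul' _ _ (ENNReal.mul_ne_top ENNReal.ofReal_ne_top ENNReal.ofReal_ne_top)
    rw [eLpNorm_eq_lintegral_rpow_enorm_toReal hq0 hqt, hqr]
    calc (∫⁻ x, (‖mollify ψ ε g x - g x‖₊ : ℝ≥0∞) ^ p ∂volume) ^ (1/p)
        ≤ (C * ENNReal.ofReal (ε ^ (s*p)) * K ε) ^ (1/p) :=
          ENNReal.rpow_le_rpow hmain (by positivity)
      _ = (C * K ε) ^ (1/p) * ENNReal.ofReal (ε ^ s) := by
          rw [show C * ENNReal.ofReal (ε ^ (s*p)) * K ε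
              = (C * K ε) * ENNReal.ofReal (ε ^ (s*p)) by ring]
          rw [ENNReal.mul_rpow_of_nonneg _ _ (by positivity : (0:ℝ) ≤ 1/p)]
          congr 1
          rw [ENNReal.ofReal_rpow_of_pos (Real.rpow_pos_of_pos hε _)]
          congr 1
          rw [← Real.rpow_mul hε.le]
          congr 1
          field_simp
  -- conclude
  unfold LittleO
  rw [hTeq]
  have hB : Tendsto (fun ε => (C * K ε) ^ (1/p)) (𝓝[>] (0:ℝ)) (𝓝 0) := by
    have h1 : Tendsto (fun ε => C * K ε) (𝓝[>] (0:ℝ)) (𝓝 0) := by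
      have := ENNReal.Tendsto.const_mul (a := C) hK0 (Or.inr ENNReal.ofReal_ne_top)
      simpa using this
    have h2 := h1.ennrpow_const (1/p)
    rwa [ENNReal.zero_rpow_of_pos (by positivity : (0:ℝ) < 1/p)] at h2
  refine tendsto_of_tendsto_of_tendsto_of_le_of_le' tendsto_const_nhds hB
    (Eventually.of_forall fun ε => zero_le) ?_
  filter_upwards [self_mem_nhdsWithin] with ε hε
  exact ENNReal.div_le_of_le_mul (hbound ε hε)
end
end

section
/- Let Ω ⊆ ℝⁿ be an open set, 0 < s < 1, and f ∈ W^{s,n/s}(Ω). Then for every x ∈ Ω, lim_{ε→0⁺} (1/|B_ε(x)|) ∫_{B_ε(x)} |f(y) − f_ε(x)|^{n/s} dy = 0, where for 0 < ε < dist(x, ∂Ω), f_ε(x) := ∫ φ_ε(z) f(x−z) dz is the mollification of f at x. -/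
open MeasureTheory Metric Set Filter Topology
open scoped ENNReal

set_option maxHeartbeats 1000000

noncomputable section

lemma scalar_calc (n : ℕ) {κ M ε p : ℝ} (hκ : 0 < κ) (hM : 0 ≤ M) (hε : 0 < ε) :
    (ε^n * κ)⁻¹ * ((M * (ε^n)⁻¹)^p * (ε^n * κ)^(p-1) * (2*ε)^(2*(n:ℝ))) =
      κ⁻¹ * (M^p * κ^(p-1) * 4^n) := by
  have ha : (0:ℝ) < ε^n := pow_pos hε n
  have h2 : (2*ε:ℝ)^(2*(n:ℝ)) = 4^n * (ε^n)^2 := by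
    rw [show (2*(n:ℝ)) = ((2*n : ℕ):ℝ) by push_cast; ring, Real.rpow_natCast, pow_mul]
    ring
  have h3 : ((M * (ε^n)⁻¹)^p : ℝ) = M^p * ((ε^n)^p)⁻¹ := by
    rw [Real.mul_rpow hM (inv_nonneg.2 ha.le), Real.inv_rpow ha.le]
  have h4 : ((ε^n * κ)^(p-1) : ℝ) = (ε^n)^(p-1) * κ^(p-1) := Real.mul_rpow ha.le hκ.le
  have h5 : (ε^n:ℝ)^(p-1) = (ε^n)^p / (ε^n) := by
    rw [Real.rpow_sub ha, Real.rpow_one]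
  have hv : (0:ℝ) < (ε^n)^p := Real.rpow_pos_of_pos ha p
  rw [h2, h3, h4, h5]
  field_simp

/-- VMO-type property: for f ∈ W^{s,n/s}(Ω) and x ∈ Ω, the mean
oscillation (1/|B_ε(x)|) ∫_{B_ε(x)} |f − f_ε(x)|^{n/s} tends to 0 as ε → 0⁺. -/
theorem fractional_sobolev_vmo
    {n : ℕ} (hn : 1 ≤ n) (Ω : Set (Rn n)) (hΩ : IsOpen Ω)
    {s : ℝ} (hs1 : 0 < s) (hs2 : s < 1)
    (f : Rn n → ℝ) (hf : MemWsp s ((n : ℝ)/s) Ω f)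
    (ψ : Rn n → ℝ) (hψ : IsMollifier ψ) :
    ∀ x ∈ Ω,
      Tendsto (fun ε =>
          (volume (ball x ε)).toReal⁻¹ *
            ∫ y in ball x ε, |f y - mollifyOn Ω ψ ε f x| ^ ((n : ℝ)/s))
        (𝓝[>] (0:ℝ)) (𝓝 0) := by
  intro x hx
  have hs0 : s ≠ 0 := ne_of_gt hs1
  set p : ℝ := (n : ℝ)/s with hpdef
  have hn1 : (1:ℝ) ≤ (n:ℝ) := by exact_mod_cast hn
  have hn0 : n ≠ 0 := by omega
  have hp1 : 1 < p := by
    rw [hpdef, lt_div_iff₀ hs1]; nlinarith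
  have hp0 : 0 < p := lt_trans one_pos hp1
  have hpne : p ≠ 0 := ne_of_gt hp0
  have hexp : (n:ℝ) + s * p = 2*(n:ℝ) := by
    rw [hpdef]; field_simp; ring
  -- measures
  set μ : Measure (Rn n) := volume.restrict Ω with hμdef
  have hfm : AEStronglyMeasurable f μ := hf.1.aestronglyMeasurable
  set F : Rn n × Rn n → ℝ≥0∞ := fun q =>
    ENNReal.ofReal (‖f q.1 - f q.2‖ ^ p / ‖q.1 - q.2‖ ^ ((n : ℝ) + s * p)) with hFdef
  have hFm : AEMeasurable F (μ.prod μ) := by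
    have h1 : AEMeasurable (fun q : Rn n × Rn n => f q.1) (μ.prod μ) := hfm.aemeasurable.comp_fst
    have h2 : AEMeasurable (fun q : Rn n × Rn n => f q.2) (μ.prod μ) := hfm.aemeasurable.comp_snd
    have h3 : AEMeasurable (fun q : Rn n × Rn n => ‖f q.1 - f q.2‖ ^ p) (μ.prod μ) :=
      ((h1.sub h2).norm).pow aemeasurable_const
    have h4 : Measurable (fun q : Rn n × Rn n => ‖q.1 - q.2‖ ^ ((n : ℝ) + s * p)) :=
      ((measurable_fst.sub measurable_snd).norm).pow measurable_const
    exact (h3.div h4.aemeasurable).ennreal_ofReal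
  have hItot : ∫⁻ q, F q ∂(μ.prod μ) ≠ ⊤ := by
    have h0 := hf.2
    rw [gagliardo] at h0
    have heq : ∫⁻ q, F q ∂(μ.prod μ) =
        ∫⁻ a in Ω, ∫⁻ b in Ω,
          ENNReal.ofReal (‖f a - f b‖ ^ p / ‖a - b‖ ^ ((n : ℝ) + s * p)) := by
      rw [lintegral_prod _ hFm]
    rw [heq]
    intro htop
    rw [htop, ENNReal.top_rpow_of_pos (by positivity)] at h0
    exact lt_irrefl _ h0
  obtain ⟨r, hr0, hrΩ⟩ := Metric.isOpen_iff.1 hΩ x hx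
  set ε₀ : ℝ := r/2 with hε₀def
  have hε₀pos : 0 < ε₀ := by positivity
  -- the tail integral
  set T : ℝ → ℝ≥0∞ := fun ε =>
    ∫⁻ q in (closedBall x ε) ×ˢ (closedBall x ε), F q ∂(μ.prod μ) with hTdef
  have hTne : ∀ ε, T ε ≠ ⊤ := by
    intro ε
    exact ((setLIntegral_le_lintegral _ _).trans_lt (lt_top_iff_ne_top.2 hItot)).ne
  have hTtend : Tendsto T (𝓝[>] (0:ℝ)) (𝓝 0) := by
    apply tendsto_setLIntegral_zero hItot
    have hub : ∀ ε:ℝ, ((μ.prod μ) ((closedBall x ε) ×ˢ (closedBall x ε))) ≤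
        volume (closedBall x ε) * volume (closedBall x ε) := by
      intro ε
      rw [Measure.prod_prod]
      have hle : μ (closedBall x ε) ≤ volume (closedBall x ε) := by
        rw [hμdef, Measure.restrict_apply measurableSet_closedBall]
        exact measure_mono Set.inter_subset_left
      exact mul_le_mul' hle hle
    have hvol : Tendsto (fun ε:ℝ => volume (closedBall x ε) * volume (closedBall x ε))
        (𝓝[>] (0:ℝ)) (𝓝 0) := by
      have h1 : Tendsto (fun ε:ℝ => volume (closedBall x ε)) (𝓝[>] (0:ℝ)) (𝓝 0) := by
        have h2 : Tendsto (fun ε:ℝ => ENNReal.ofReal (ε^n) * volume (ball (0:Rn n) 1))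
            (𝓝[>] (0:ℝ)) (𝓝 0) := by
          have h3 : Tendsto (fun ε:ℝ => ε^n) (𝓝[>] (0:ℝ)) (𝓝 0) := by
            have := ((continuous_pow n).tendsto (0:ℝ)).mono_left
              (nhdsWithin_le_nhds (s := Ioi (0:ℝ)))
            simpa [zero_pow hn0] using this
          have h4 : Tendsto (fun ε:ℝ => ENNReal.ofReal (ε^n)) (𝓝[>] (0:ℝ)) (𝓝 0) := by
            simpa using (ENNReal.tendsto_ofReal h3)
          simpa using ENNReal.Tendsto.mul_const h4 (Or.inr measure_ball_lt_top.ne)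
        apply Tendsto.congr' _ h2
        filter_upwards [self_mem_nhdsWithin] with ε (hε : ε ∈ Ioi (0:ℝ))
        rw [Measure.addHaar_closedBall volume x (le_of_lt hε), finrank_euclideanSpace_fin]
      simpa using ENNReal.Tendsto.mul h1 (Or.inr ENNReal.zero_ne_top) h1
        (Or.inr ENNReal.zero_ne_top)
    exact tendsto_of_tendsto_of_tendsto_of_le_of_le tendsto_const_nhds hvol
      (fun ε => zero_le) hub
  -- constants
  set v1 : ℝ≥0∞ := volume (ball (0:Rn n) 1) with hv1def
  have hv1pos : 0 < v1 := measure_ball_pos _ _ one_pos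
  have hv1ne : v1 ≠ ⊤ := measure_ball_lt_top.ne
  set κ : ℝ := v1.toReal with hκdef
  have hκpos : 0 < κ := ENNReal.toReal_pos hv1pos.ne' hv1ne
  have hψc : Continuous ψ := hψ.smooth.continuous
  have hψHCS : HasCompactSupport ψ :=
    IsCompact.of_isClosed_subset (isCompact_closedBall 0 1) (isClosed_tsupport ψ) hψ.supp
  obtain ⟨M₀, hM₀⟩ := hψc.bddAbove_range_of_hasCompactSupport hψHCS
  set M : ℝ := max M₀ 1 with hMdef
  have hM : ∀ z, ψ z ≤ M := fun z => le_trans (hM₀ ⟨z, rfl⟩) (le_max_left _ _)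
  have hMpos : 0 < M := lt_of_lt_of_le one_pos (le_max_right _ _)
  set C : ℝ := κ⁻¹ * (M^p * κ^(p-1) * 4^n) with hCdef
  -- main estimate
  have key : ∀ ε ∈ Ioo (0:ℝ) ε₀,
      (volume (ball x ε)).toReal⁻¹ *
        ∫ y in ball x ε, |f y - mollifyOn Ω ψ ε f x| ^ p ≤ C * (T ε).toReal := by
    intro ε hε
    obtain ⟨hε0, hεlt⟩ := hε
    have hSsub : closedBall x ε ⊆ Ω :=
      (closedBall_subset_ball (by rw [hε₀def] at hεlt; linarith)).trans hrΩ
    set S : Set (Rn n) := closedBall x ε with hSdef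
    set B : Set (Rn n) := ball x ε with hBdef
    have hBΩ : B ⊆ Ω := ball_subset_closedBall.trans hSsub
    set c : ℝ := mollifyOn Ω ψ ε f x with hcdef
    set f1 : Rn n → ℝ := Ω.indicator f with hf1def
    set ψε : Rn n → ℝ := fun z => (ε ^ n)⁻¹ * ψ (ε⁻¹ • z) with hψεdef
    have hψεc : Continuous ψε :=
      continuous_const.mul (hψc.comp (continuous_const_smul ε⁻¹))
    have hψε_zero : ∀ z ∉ closedBall (0:Rn n) ε, ψε z = 0 := by
      intro z hz
      have hnm : ε⁻¹ • z ∉ tsupport ψ := by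
        intro hmem
        have h1 := hψ.supp hmem
        apply hz
        simp only [mem_closedBall, dist_zero_right] at h1 ⊢
        rw [norm_smul, norm_inv, Real.norm_eq_abs, abs_of_pos hε0] at h1
        calc ‖z‖ = ε * (ε⁻¹ * ‖z‖) := by field_simp
          _ ≤ ε * 1 := mul_le_mul_of_nonneg_left h1 hε0.le
          _ = ε := mul_one ε
      rw [hψεdef]
      simp [image_eq_zero_of_notMem_tsupport hnm]
    have hψεHCS : HasCompactSupport ψε :=
      HasCompactSupport.intro (isCompact_closedBall _ _) hψε_zero
    have hεpow : (0:ℝ) < ε^n := pow_pos hε0 n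
    have hψε_nonneg : ∀ z, 0 ≤ ψε z :=
      fun z => mul_nonneg (inv_nonneg.2 hεpow.le) (hψ.nonneg _)
    have hψε_le : ∀ z, ψε z ≤ M * (ε^n)⁻¹ := by
      intro z
      rw [hψεdef, mul_comm M]
      exact mul_le_mul_of_nonneg_left (hM _) (inv_nonneg.2 hεpow.le)
    have hψεone : ∫ z, ψε z = 1 := by
      rw [hψεdef]
      rw [integral_const_mul, MeasureTheory.Measure.integral_comp_smul volume ψ ε⁻¹,
        finrank_euclideanSpace_fin, hψ.integral_one, smul_eq_mul, mul_one, inv_pow, inv_inv,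
        abs_of_pos hεpow]
      field_simp
    have hf1Lp : MemLp f1 (ENNReal.ofReal p) volume :=
      (memLp_indicator_iff_restrict hΩ.measurableSet).2 hf.1
    have hf1loc : LocallyIntegrable f1 volume :=
      hf1Lp.locallyIntegrable (ENNReal.one_le_ofReal.2 hp1.le)
    have hconv : Integrable (fun z => ψε z * f1 (x - z)) volume := by
      have h := hψεHCS.convolutionExists_left (ContinuousLinearMap.lsmul ℝ ℝ) hψεc hf1loc x
      simpa [ConvolutionExistsAt, ContinuousLinearMap.lsmul_apply, smul_eq_mul] using h
    have hψεInt : Integrable ψε volume := hψεc.integrable_of_hasCompactSupport hψεHCS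
    have hcval : c = ∫ z, ψε z * f1 (x - z) := by
      rw [hcdef]
      simp only [mollifyOn, mollify, smul_eq_mul, hψεdef, hf1def]
    set K : ℝ≥0∞ := ENNReal.ofReal (M * (ε^n)⁻¹) with hKdef
    -- step 1: pointwise bound through the mollifier
    have key1 : ∀ y : Rn n, ENNReal.ofReal |f y - c| ≤
        K * ∫⁻ w in S, ENNReal.ofReal |f y - f w| ∂volume := by
      intro y
      have h1 : Integrable (fun z => ψε z * f y) volume := hψεInt.mul_const _
      have hsub : f y - c = ∫ z, ψε z * (f y - f1 (x - z)) := by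
        rw [hcval]
        have e1 : f y = ∫ z, ψε z * f y := by
          rw [integral_mul_const, hψεone, one_mul]
        calc f y - (∫ z, ψε z * f1 (x - z))
            = (∫ z, ψε z * f y) - ∫ z, ψε z * f1 (x - z) := by rw [← e1]
          _ = ∫ z, (ψε z * f y - ψε z * f1 (x - z)) := (integral_sub h1 hconv).symm
          _ = ∫ z, ψε z * (f y - f1 (x - z)) := by
              congr 1; funext z; ring
      have h5 : ENNReal.ofReal |f y - c| ≤
          ∫⁻ z, ENNReal.ofReal ‖ψε z * (f y - f1 (x - z))‖ ∂volume := by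
        calc ENNReal.ofReal |f y - c| = ENNReal.ofReal ‖f y - c‖ := by
              rw [Real.norm_eq_abs]
          _ ≤ ENNReal.ofReal
                ((∫⁻ z, ENNReal.ofReal ‖ψε z * (f y - f1 (x - z))‖ ∂volume).toReal) := by
              apply ENNReal.ofReal_le_ofReal
              rw [hsub]
              exact norm_integral_le_lintegral_norm _
          _ ≤ _ := ENNReal.ofReal_toReal_le
      have h6 : ∀ z, ENNReal.ofReal ‖ψε z * (f y - f1 (x - z))‖ ≤
          (closedBall (0:Rn n) ε).indicator
            (fun z => K * ENNReal.ofReal |f y - f1 (x - z)|) z := by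
        intro z
        by_cases hz : z ∈ closedBall (0:Rn n) ε
        · rw [Set.indicator_of_mem hz, norm_mul, Real.norm_eq_abs, Real.norm_eq_abs,
            hKdef, ← ENNReal.ofReal_mul (by positivity)]
          apply ENNReal.ofReal_le_ofReal
          apply mul_le_mul_of_nonneg_right _ (abs_nonneg _)
          rw [abs_of_nonneg (hψε_nonneg z)]
          exact hψε_le z
        · rw [Set.indicator_of_notMem hz]
          simp [hψε_zero z hz]
      have h7 : (∫⁻ z, ENNReal.ofReal ‖ψε z * (f y - f1 (x - z))‖ ∂volume) ≤
          K * ∫⁻ z in closedBall (0:Rn n) ε, ENNReal.ofReal |f y - f1 (x - z)| ∂volume := by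
        calc (∫⁻ z, ENNReal.ofReal ‖ψε z * (f y - f1 (x - z))‖ ∂volume)
            ≤ ∫⁻ z, (closedBall (0:Rn n) ε).indicator
                (fun z => K * ENNReal.ofReal |f y - f1 (x - z)|) z ∂volume :=
              lintegral_mono h6
          _ = ∫⁻ z in closedBall (0:Rn n) ε,
                K * ENNReal.ofReal |f y - f1 (x - z)| ∂volume :=
              lintegral_indicator measurableSet_closedBall _
          _ = K * ∫⁻ z in closedBall (0:Rn n) ε, ENNReal.ofReal |f y - f1 (x - z)| ∂volume :=
              lintegral_const_mul' _ _ ENNReal.ofReal_ne_top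
      have h8 : ∫⁻ z in closedBall (0:Rn n) ε, ENNReal.ofReal |f y - f1 (x - z)| ∂volume
          = ∫⁻ w in S, ENNReal.ofReal |f y - f1 w| ∂volume := by
        have hmap : Measure.map (fun z : Rn n => x - z) volume = volume :=
          Measure.map_sub_left_eq_self volume x
        have hmem : ∀ z : Rn n, (x - z ∈ S) ↔ (z ∈ closedBall (0:Rn n) ε) := by
          intro z
          simp only [hSdef, mem_closedBall, dist_eq_norm, sub_sub_cancel_left, sub_zero,
            norm_neg]
        calc ∫⁻ z in closedBall (0:Rn n) ε, ENNReal.ofReal |f y - f1 (x - z)| ∂volume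
            = ∫⁻ z, (closedBall (0:Rn n) ε).indicator
                (fun z => ENNReal.ofReal |f y - f1 (x - z)|) z ∂volume :=
              (lintegral_indicator measurableSet_closedBall _).symm
          _ = ∫⁻ z, S.indicator (fun w => ENNReal.ofReal |f y - f1 w|) (x - z) ∂volume := by
              congr 1; funext z
              by_cases hz : z ∈ closedBall (0:Rn n) ε
              · rw [Set.indicator_of_mem hz, Set.indicator_of_mem ((hmem z).2 hz)]
              · rw [Set.indicator_of_notMem hz,
                  Set.indicator_of_notMem (fun hmm => hz ((hmem z).1 hmm))]
          _ = ∫⁻ z, S.indicator (fun w => ENNReal.ofReal |f y - f1 w|)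
                ((MeasurableEquiv.subLeft x) z) ∂volume := rfl
          _ = ∫⁻ w, S.indicator (fun w => ENNReal.ofReal |f y - f1 w|) w
                ∂(Measure.map (MeasurableEquiv.subLeft x) volume) :=
              (lintegral_map_equiv _ (MeasurableEquiv.subLeft x)).symm
          _ = ∫⁻ w, S.indicator (fun w => ENNReal.ofReal |f y - f1 w|) w ∂volume := by
              rw [show (Measure.map (⇑(MeasurableEquiv.subLeft x)) volume) = volume from hmap]
          _ = ∫⁻ w in S, ENNReal.ofReal |f y - f1 w| ∂volume :=
              lintegral_indicator measurableSet_closedBall _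
      have h9 : ∫⁻ w in S, ENNReal.ofReal |f y - f1 w| ∂volume
          = ∫⁻ w in S, ENNReal.ofReal |f y - f w| ∂volume := by
        apply setLIntegral_congr_fun measurableSet_closedBall
        intro w hw
        beta_reduce
        rw [hf1def, Set.indicator_of_mem (hSsub hw)]
      calc ENNReal.ofReal |f y - c| ≤ _ := h5
        _ ≤ K * ∫⁻ z in closedBall (0:Rn n) ε, ENNReal.ofReal |f y - f1 (x - z)| ∂volume := h7
        _ = K * ∫⁻ w in S, ENNReal.ofReal |f y - f w| ∂volume := by rw [h8, h9]
    -- measurability of f on S and B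
    have hSrest : volume.restrict S = μ.restrict S := by
      rw [hμdef, Measure.restrict_restrict measurableSet_closedBall,
        Set.inter_eq_left.2 hSsub]
    have hfS : AEStronglyMeasurable f (volume.restrict S) := by
      rw [hSrest]
      exact hfm.mono_measure Measure.restrict_le_self
    have hfB : AEStronglyMeasurable f (volume.restrict B) :=
      hfm.mono_measure (Measure.restrict_mono hBΩ le_rfl)
    -- step 2 : Hölder
    have hpq : p.HolderConjugate (p/(p-1)) := by
      exact Real.HolderConjugate.conjExponent hp1
    have hKne : K ≠ ⊤ := ENNReal.ofReal_ne_top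
    have hKp_ne : K ^ p ≠ ⊤ := ENNReal.rpow_ne_top_of_nonneg hp0.le hKne
    have hVS_ne : volume S ≠ ⊤ := measure_closedBall_lt_top.ne
    have hVq_ne : (volume S) ^ (p-1) ≠ ⊤ :=
      ENNReal.rpow_ne_top_of_nonneg (by linarith) hVS_ne
    have key2 : ∀ y : Rn n, ENNReal.ofReal (|f y - c| ^ p) ≤
        (K ^ p * (volume S) ^ (p-1)) *
          ∫⁻ w in S, ENNReal.ofReal (|f y - f w| ^ p) ∂volume := by
      intro y
      have hg : AEMeasurable (fun w => ENNReal.ofReal |f y - f w|) (volume.restrict S) := by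
        have habs : AEMeasurable (fun w => |f y - f w|) (volume.restrict S) := by
          have h := (aemeasurable_const.sub hfS.aemeasurable : AEMeasurable
            (fun w => f y - f w) (volume.restrict S))
          simpa [Real.norm_eq_abs] using h.norm
        exact habs.ennreal_ofReal
      have hhold := ENNReal.lintegral_mul_le_Lp_mul_Lq (volume.restrict S) hpq hg
        (aemeasurable_const : AEMeasurable (fun _ => (1:ℝ≥0∞)) _)
      simp only [Pi.mul_apply, mul_one, ENNReal.one_rpow, lintegral_const, one_mul,
        Measure.restrict_apply MeasurableSet.univ, Set.univ_inter] at hhold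
      have hfix : ∫⁻ w in S, (ENNReal.ofReal |f y - f w|) ^ p ∂volume
          = ∫⁻ w in S, ENNReal.ofReal (|f y - f w| ^ p) ∂volume := by
        apply lintegral_congr
        intro w
        rw [ENNReal.ofReal_rpow_of_nonneg (abs_nonneg _) hp0.le]
      calc ENNReal.ofReal (|f y - c| ^ p)
          = (ENNReal.ofReal |f y - c|) ^ p :=
            (ENNReal.ofReal_rpow_of_nonneg (abs_nonneg _) hp0.le).symm
        _ ≤ (K * ∫⁻ w in S, ENNReal.ofReal |f y - f w| ∂volume) ^ p :=
            ENNReal.rpow_le_rpow (key1 y) hp0.le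
        _ ≤ (K * ((∫⁻ w in S, (ENNReal.ofReal |f y - f w|) ^ p ∂volume) ^ (1/p) *
              (volume S) ^ (1/(p/(p-1))))) ^ p := by
            apply ENNReal.rpow_le_rpow _ hp0.le
            exact mul_le_mul_right hhold K
        _ = K ^ p * (((∫⁻ w in S, (ENNReal.ofReal |f y - f w|) ^ p ∂volume) ^ (1/p)) ^ p *
              ((volume S) ^ (1/(p/(p-1)))) ^ p) := by
            rw [ENNReal.mul_rpow_of_nonneg _ _ hp0.le, ENNReal.mul_rpow_of_nonneg _ _ hp0.le]
        _ = (K ^ p * (volume S) ^ (p-1)) *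
              ∫⁻ w in S, ENNReal.ofReal (|f y - f w| ^ p) ∂volume := by
            rw [← ENNReal.rpow_mul, ← ENNReal.rpow_mul,
              one_div_mul_cancel hpne, ENNReal.rpow_one,
              show (1/(p/(p-1))) * p = p - 1 by
                have hpm1 : p - 1 ≠ 0 := sub_ne_zero.2 (ne_of_gt hp1)
                field_simp,
              hfix]
            ring
    -- step 3 : integrate over the ball
    have key3 : ∫⁻ y in B, ENNReal.ofReal (|f y - c| ^ p) ∂volume ≤
        (K ^ p * (volume S) ^ (p-1)) *
          ∫⁻ y in B, (∫⁻ w in S, ENNReal.ofReal (|f y - f w| ^ p) ∂volume) ∂volume := by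
      calc ∫⁻ y in B, ENNReal.ofReal (|f y - c| ^ p) ∂volume
          ≤ ∫⁻ y in B, (K ^ p * (volume S) ^ (p-1)) *
              (∫⁻ w in S, ENNReal.ofReal (|f y - f w| ^ p) ∂volume) ∂volume :=
            lintegral_mono (fun y => key2 y)
        _ = _ := lintegral_const_mul' _ _ (ENNReal.mul_ne_top hKp_ne hVq_ne)
    -- step 4 : compare with the Gagliardo tail
    have hprodle : (μ.restrict S).prod (μ.restrict S) ≤ μ.prod μ := by
      rw [Measure.prod_restrict]
      exact Measure.restrict_le_self
    have hFm' : AEMeasurable F ((μ.restrict S).prod (μ.restrict S)) :=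
      hFm.mono_measure hprodle
    have hiter : ∫⁻ y in S, (∫⁻ w in S, F (y, w) ∂volume) ∂volume = T ε := by
      rw [hTdef]
      calc ∫⁻ y in S, (∫⁻ w in S, F (y, w) ∂volume) ∂volume
          = ∫⁻ y, (∫⁻ w, F (y, w) ∂(μ.restrict S)) ∂(μ.restrict S) := by rw [hSrest]
        _ = ∫⁻ q, F q ∂((μ.restrict S).prod (μ.restrict S)) := (lintegral_prod _ hFm').symm
        _ = ∫⁻ q in S ×ˢ S, F q ∂(μ.prod μ) := by rw [Measure.prod_restrict]
    have key4 : ∫⁻ y in B, (∫⁻ w in S, ENNReal.ofReal (|f y - f w| ^ p) ∂volume) ∂volume ≤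
        ENNReal.ofReal ((2*ε) ^ ((n:ℝ) + s * p)) * T ε := by
      have inner : ∀ y ∈ S, ∫⁻ w in S, ENNReal.ofReal (|f y - f w| ^ p) ∂volume ≤
          ENNReal.ofReal ((2*ε) ^ ((n:ℝ) + s * p)) * ∫⁻ w in S, F (y, w) ∂volume := by
        intro y hy
        rw [← lintegral_const_mul' _ _ ENNReal.ofReal_ne_top]
        apply lintegral_mono_ae
        rw [ae_restrict_iff' measurableSet_closedBall]
        apply ae_of_all
        intro w hw
        have hdist : ‖y - w‖ ≤ 2*ε := by
          have h1 : dist y w ≤ dist y x + dist x w := dist_triangle y x w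
          rw [← dist_eq_norm]
          have h2 : dist y x ≤ ε := mem_closedBall.1 hy
          have h3 : dist x w ≤ ε := by
            rw [dist_comm]; exact mem_closedBall.1 hw
          linarith
        rw [hFdef]
        simp only [Real.norm_eq_abs]
        rw [← ENNReal.ofReal_mul (by positivity)]
        apply ENNReal.ofReal_le_ofReal
        rcases eq_or_ne y w with hyw | hyw
        · subst hyw
          simp only [sub_self, abs_zero]
          rw [Real.zero_rpow hpne]
          positivity
        · have hd0 : (0:ℝ) < ‖y - w‖ := by
            rw [norm_pos_iff, sub_ne_zero]; exact hyw
          have h2e : (0:ℝ) < (2*ε) ^ ((n:ℝ) + s * p) :=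
            Real.rpow_pos_of_pos (by linarith) _
          have hde : (0:ℝ) < ‖y - w‖ ^ ((n:ℝ) + s * p) := Real.rpow_pos_of_pos hd0 _
          have hle : ‖y - w‖ ^ ((n:ℝ) + s * p) ≤ (2*ε) ^ ((n:ℝ) + s * p) :=
            Real.rpow_le_rpow (norm_nonneg _) hdist (by positivity)
          have hq : 0 ≤ |f y - f w| ^ p := Real.rpow_nonneg (abs_nonneg _) p
          calc |f y - f w| ^ p
              = (|f y - f w| ^ p / ‖y - w‖ ^ ((n:ℝ) + s * p)) * ‖y - w‖ ^ ((n:ℝ) + s * p) :=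
                (div_mul_cancel₀ _ hde.ne').symm
            _ ≤ (|f y - f w| ^ p / ‖y - w‖ ^ ((n:ℝ) + s * p)) * (2*ε) ^ ((n:ℝ) + s * p) :=
                mul_le_mul_of_nonneg_left hle (div_nonneg hq hde.le)
            _ = (2*ε) ^ ((n:ℝ) + s * p) * (|f y - f w| ^ p / ‖y - w‖ ^ ((n:ℝ) + s * p)) :=
                mul_comm _ _
      calc ∫⁻ y in B, (∫⁻ w in S, ENNReal.ofReal (|f y - f w| ^ p) ∂volume) ∂volume
          ≤ ∫⁻ y in S, (∫⁻ w in S, ENNReal.ofReal (|f y - f w| ^ p) ∂volume) ∂volume :=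
            lintegral_mono_set ball_subset_closedBall
        _ ≤ ∫⁻ y in S, ENNReal.ofReal ((2*ε) ^ ((n:ℝ) + s * p)) *
              (∫⁻ w in S, F (y, w) ∂volume) ∂volume := by
            apply lintegral_mono_ae
            rw [ae_restrict_iff' measurableSet_closedBall]
            exact ae_of_all _ inner
        _ = ENNReal.ofReal ((2*ε) ^ ((n:ℝ) + s * p)) *
              ∫⁻ y in S, (∫⁻ w in S, F (y, w) ∂volume) ∂volume :=
            lintegral_const_mul' _ _ ENNReal.ofReal_ne_top
        _ = ENNReal.ofReal ((2*ε) ^ ((n:ℝ) + s * p)) * T ε := by rw [hiter]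
    -- assemble
    have hmeasB : AEStronglyMeasurable (fun y => |f y - c| ^ p) (volume.restrict B) := by
      have h := (hfB.aemeasurable.sub aemeasurable_const : AEMeasurable
        (fun y => f y - c) (volume.restrict B))
      have habs : AEMeasurable (fun y => |f y - c|) (volume.restrict B) := by
        simpa [Real.norm_eq_abs] using h.norm
      exact (habs.pow aemeasurable_const).aestronglyMeasurable
    have hre : ∫ y in B, |f y - c| ^ p ∂volume
        = (∫⁻ y in B, ENNReal.ofReal (|f y - c| ^ p) ∂volume).toReal := by
      rw [integral_eq_lintegral_of_nonneg_ae
        (ae_of_all _ fun y => Real.rpow_nonneg (abs_nonneg _) p) hmeasB]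
    set Etot : ℝ≥0∞ := (K ^ p * (volume S) ^ (p-1)) *
      (ENNReal.ofReal ((2*ε) ^ ((n:ℝ) + s * p)) * T ε) with hEdef
    have hchain : ∫⁻ y in B, ENNReal.ofReal (|f y - c| ^ p) ∂volume ≤ Etot :=
      key3.trans (mul_le_mul_right key4 _)
    have hEne : Etot ≠ ⊤ := by
      apply ENNReal.mul_ne_top (ENNReal.mul_ne_top hKp_ne hVq_ne)
      exact ENNReal.mul_ne_top ENNReal.ofReal_ne_top (hTne ε)
    have hEtoReal : Etot.toReal = (M * (ε^n)⁻¹) ^ p * (volume S).toReal ^ (p-1) *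
        ((2*ε) ^ ((n:ℝ) + s * p)) * (T ε).toReal := by
      rw [hEdef, ENNReal.toReal_mul, ENNReal.toReal_mul, ENNReal.toReal_mul,
        ← ENNReal.toReal_rpow, ← ENNReal.toReal_rpow, hKdef,
        ENNReal.toReal_ofReal (by positivity), ENNReal.toReal_ofReal (by positivity)]
      ring
    have hvolB : (volume B).toReal = ε^n * κ := by
      rw [hBdef, Measure.addHaar_ball_of_pos volume x hε0, finrank_euclideanSpace_fin,
        ENNReal.toReal_mul, ENNReal.toReal_ofReal hεpow.le, hκdef, hv1def]
    have hvolS : (volume S).toReal = ε^n * κ := by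
      rw [hSdef, Measure.addHaar_closedBall volume x hε0.le, finrank_euclideanSpace_fin,
        ENNReal.toReal_mul, ENNReal.toReal_ofReal hεpow.le, hκdef, hv1def]
    calc (volume B).toReal⁻¹ * ∫ y in B, |f y - c| ^ p ∂volume
        ≤ (volume B).toReal⁻¹ * Etot.toReal := by
          rw [hre]
          exact mul_le_mul_of_nonneg_left (ENNReal.toReal_mono hEne hchain)
            (inv_nonneg.2 ENNReal.toReal_nonneg)
      _ = C * (T ε).toReal := by
          rw [hEtoReal, hvolB, hvolS, hexp, hCdef,
            ← scalar_calc (p := p) n hκpos hMpos.le hε0]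
          ring
  -- conclusion
  have hTr : Tendsto (fun ε => C * (T ε).toReal) (𝓝[>] (0:ℝ)) (𝓝 0) := by
    have h1 : Tendsto (fun ε => (T ε).toReal) (𝓝[>] (0:ℝ)) (𝓝 0) := by
      have := (ENNReal.tendsto_toReal (ENNReal.zero_ne_top)).comp hTtend
      simpa [Function.comp_def] using this
    simpa using h1.const_mul C
  apply squeeze_zero' _ _ hTr
  · apply Eventually.of_forall
    intro ε
    have h0 : 0 ≤ ∫ y in ball x ε, |f y - mollifyOn Ω ψ ε f x| ^ p := by
      apply integral_nonneg
      intro y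
      positivity
    positivity
  · filter_upwards [Ioo_mem_nhdsGT hε₀pos] with ε hε
    exact key ε hε
end
end

section
/- Let s ∈ (0,1) and p ∈ (1,∞) with sp > 1, and let u ∈ W^{s,p}(ℝ). Then the continuous representative u* of u is (sp−1, p)-absolutely continuous: for every ε > 0 there exists δ > 0 such that whenever (I_i)_{i} is a finite or countable collection of pairwise disjoint intervals with Σ_i |I_i| < δ, one has Σ_i sup_{x≠y ∈ I_i} |u*(x)−u*(y)|^p / |x−y|^{sp−1} < ε. -/
open MeasureTheory Metric Set Filter Topology
open scoped ENNReal

noncomputable section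

/-- The one-dimensional Gagliardo seminorm [f]_{W^{s,p}(ℝ)}. -/
def gagliardo1 {E : Type} [NormedAddCommGroup E] (s p : ℝ) (f : ℝ → E) : ℝ≥0∞ :=
  (∫⁻ x : ℝ, ∫⁻ y : ℝ,
    ENNReal.ofReal (‖f x - f y‖ ^ p / |x - y| ^ (1 + s * p))) ^ (1 / p)

namespace FracAC

/-- The Gagliardo kernel as an `ℝ≥0∞`-valued function on `ℝ × ℝ`. -/
def ker (s p : ℝ) (v : ℝ → ℝ) (q : ℝ × ℝ) : ℝ≥0∞ :=
  ENNReal.ofReal (|v q.1 - v q.2| ^ p / |q.1 - q.2| ^ (1 + s * p))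

variable {s p : ℝ}

lemma measurable_ker (hs : 0 < s) (hp : 1 < p) {v : ℝ → ℝ} (hv : Continuous v) :
    Measurable (ker s p v) := by
  apply ENNReal.measurable_ofReal.comp
  apply Measurable.div
  · exact (((hv.comp continuous_fst).sub (hv.comp continuous_snd)).abs.rpow_const
      (fun x => Or.inr (by positivity))).measurable
  · exact ((continuous_fst.sub continuous_snd).abs.rpow_const
      (fun x => Or.inr (by positivity))).measurable

/-- Core estimate: difference of averages over `(a, a+h)` and `(a, a+h/2)`. -/
lemma core (hs1 : 0 < s) (hp : 1 < p) (hsp : 1 < s * p) {f : ℝ → ℝ} (hf : Continuous f)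
    {a b h : ℝ} (h0 : 0 < h) (hhb : a + h ≤ b)
    (hD : ∫⁻ q in Ioo a b ×ˢ Ioo a b, ker s p f q ≠ ⊤) :
    |h⁻¹ * (∫ t in Ioo a (a + h), f t) - (h / 2)⁻¹ * ∫ t in Ioo a (a + h / 2), f t| ≤
      2 * h ^ (s - 1 / p) *
        ((∫⁻ q in Ioo a b ×ˢ Ioo a b, ker s p f q).toReal) ^ (1 / p) := by
  have hp0 : 0 < p := lt_trans one_pos hp
  set J := Ioo a (a + h) with hJdef
  set J' := Ioo a (a + h / 2) with hJ'def
  have h2 : (0:ℝ) < h / 2 := by linarith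
  have hJS : J ⊆ Ioo a b := Ioo_subset_Ioo le_rfl hhb
  have hJ'J : J' ⊆ J := Ioo_subset_Ioo le_rfl (by linarith)
  have mJ : volume J = ENNReal.ofReal h := by simp [hJdef]
  have mJ' : volume J' = ENNReal.ofReal (h / 2) := by simp [hJ'def]
  -- integrability on the product
  have hcont1 : Continuous fun q : ℝ × ℝ => f q.1 := hf.comp continuous_fst
  have hcont2 : Continuous fun q : ℝ × ℝ => f q.2 := hf.comp continuous_snd
  have hK : IsCompact (Icc a (a + h) ×ˢ Icc a (a + h / 2)) :=
    isCompact_Icc.prod isCompact_Icc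
  have hsub : J ×ˢ J' ⊆ Icc a (a + h) ×ˢ Icc a (a + h / 2) :=
    prod_mono Ioo_subset_Icc_self Ioo_subset_Icc_self
  have hint1 : IntegrableOn (fun q : ℝ × ℝ => f q.1) (J ×ˢ J') volume :=
    (hcont1.continuousOn.integrableOn_compact hK).mono_set hsub
  have hint2 : IntegrableOn (fun q : ℝ × ℝ => f q.2) (J ×ˢ J') volume :=
    (hcont2.continuousOn.integrableOn_compact hK).mono_set hsub
  have hint : IntegrableOn (fun q : ℝ × ℝ => |f q.1 - f q.2|) (J ×ˢ J') volume :=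
    (((hcont1.sub hcont2).abs).continuousOn.integrableOn_compact hK).mono_set hsub
  have hintsub : IntegrableOn (fun q : ℝ × ℝ => f q.1 - f q.2) (J ×ˢ J') volume :=
    hint1.sub hint2
  have hfJ : IntegrableOn f J volume := hf.integrableOn_Icc.mono_set Ioo_subset_Icc_self
  have hfJ' : IntegrableOn f J' volume := hf.integrableOn_Icc.mono_set Ioo_subset_Icc_self
  -- the key identity
  have e1 : ∫ q in J ×ˢ J', (f q.1 - f q.2) =
      (h / 2) * (∫ t in J, f t) - h * ∫ t in J', f t := by
    rw [Measure.volume_eq_prod ℝ ℝ] at hint1 hint2 ⊢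
    rw [integral_sub hint1 hint2, setIntegral_prod _ hint1, setIntegral_prod _ hint2]
    have ea : (∫ (x : ℝ) in J, ∫ (y : ℝ) in J', f (x, y).1) = (h / 2) * ∫ t in J, f t := by
      have hxe : ∀ x : ℝ, (∫ (y : ℝ) in J', f (x, y).1) = (h / 2) * f x := by
        intro x
        rw [show (fun y : ℝ => f (x, y).1) = fun _ : ℝ => f x from rfl,
          setIntegral_const, measureReal_def, mJ', ENNReal.toReal_ofReal h2.le, smul_eq_mul]
      simp only [hxe]
      exact integral_const_mul _ _
    have eb : (∫ (x : ℝ) in J, ∫ (y : ℝ) in J', f (x, y).2) = h * ∫ t in J', f t := by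
      rw [show (fun x : ℝ => ∫ (y : ℝ) in J', f (x, y).2) = fun _ : ℝ => ∫ y in J', f y
        from rfl, setIntegral_const, measureReal_def, mJ, ENNReal.toReal_ofReal h0.le, smul_eq_mul]
    rw [ea, eb]

  have key : h⁻¹ * (∫ t in J, f t) - (h / 2)⁻¹ * (∫ t in J', f t) =
      (h * (h / 2))⁻¹ * ∫ q in J ×ˢ J', (f q.1 - f q.2) := by
    have hne : h ≠ 0 := h0.ne'
    rw [e1]; field_simp
  rw [key, abs_mul, abs_inv, abs_of_pos (by positivity : (0:ℝ) < h * (h / 2))]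
  -- bound |∫| by lintegral and apply Hölder
  have habs : |∫ q in J ×ˢ J', (f q.1 - f q.2)| ≤ ∫ q in J ×ˢ J', |f q.1 - f q.2| := by
    simpa [Real.norm_eq_abs] using
      norm_integral_le_integral_norm (μ := volume.restrict (J ×ˢ J'))
        (fun q : ℝ × ℝ => f q.1 - f q.2)
  have hconv : ∫ q in J ×ˢ J', |f q.1 - f q.2| =
      (∫⁻ q in J ×ˢ J', ENNReal.ofReal |f q.1 - f q.2|).toReal := by
    rw [← ofReal_integral_eq_lintegral_ofReal hint (ae_of_all _ fun q => abs_nonneg _),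
      ENNReal.toReal_ofReal (integral_nonneg fun q => abs_nonneg _)]
  set Dq := ∫⁻ q in Ioo a b ×ˢ Ioo a b, ker s p f q with hDq
  set D := Dq.toReal with hDdef
  have hD0 : 0 ≤ D := ENNReal.toReal_nonneg
  -- Hölder
  set q' := Real.conjExponent p with hq'def
  have hpq : p.HolderConjugate q' := Real.HolderConjugate.conjExponent hp
  have hq' : 1 / q' = 1 - 1 / p := by
    have h1 := hpq.inv_add_inv_eq_one
    rw [one_div, one_div]; linarith
  have hp1le : 1 / p ≤ 1 := by
    rw [div_le_one hp0]; exact hp.le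
  have hq'0 : (0:ℝ) ≤ 1 / q' := by rw [hq']; linarith
  have hmeas : Measurable fun q : ℝ × ℝ => ENNReal.ofReal |f q.1 - f q.2| :=
    ENNReal.measurable_ofReal.comp (hcont1.sub hcont2).abs.measurable
  have holder := ENNReal.lintegral_mul_le_Lp_mul_Lq (volume.restrict (J ×ˢ J')) hpq
    hmeas.aemeasurable (aemeasurable_const (b := (1:ℝ≥0∞)))
  simp only [Pi.mul_apply, mul_one, ENNReal.one_rpow] at holder
  rw [lintegral_const, Measure.restrict_apply MeasurableSet.univ, univ_inter,
    one_mul] at holder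
  have mJJ' : volume (J ×ˢ J') = ENNReal.ofReal h * ENNReal.ofReal (h / 2) := by
    rw [Measure.volume_eq_prod ℝ ℝ, Measure.prod_prod, mJ, mJ']
  -- pointwise kernel bound
  have hpoint : ∀ q ∈ J ×ˢ J',
      ENNReal.ofReal |f q.1 - f q.2| ^ p ≤
        ENNReal.ofReal (h ^ (1 + s * p)) * ker s p f q := by
    rintro ⟨z, w⟩ ⟨hz, hw⟩
    rw [ENNReal.ofReal_rpow_of_nonneg (abs_nonneg _) hp0.le]
    rcases eq_or_ne z w with rfl | hzw
    · simp [Real.zero_rpow hp0.ne']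
    · have hzw0 : (0:ℝ) < |z - w| := abs_pos.mpr (sub_ne_zero.mpr hzw)
      have hzwh : |z - w| ≤ h := by
        rw [abs_sub_le_iff]
        simp only [hJdef, hJ'def, mem_Ioo] at hz hw
        constructor <;> linarith
      have hden : (0:ℝ) < |z - w| ^ (1 + s * p) := by positivity
      have hnum : |f z - f w| ^ p =
          (|f z - f w| ^ p / |z - w| ^ (1 + s * p)) * |z - w| ^ (1 + s * p) := by
        field_simp
      have hle : |f z - f w| ^ p ≤
          h ^ (1 + s * p) * (|f z - f w| ^ p / |z - w| ^ (1 + s * p)) := by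
        have hmono : |z - w| ^ (1 + s * p) ≤ h ^ (1 + s * p) :=
          Real.rpow_le_rpow (abs_nonneg _) hzwh (by positivity)
        calc |f z - f w| ^ p
            = (|f z - f w| ^ p / |z - w| ^ (1 + s * p)) * |z - w| ^ (1 + s * p) := hnum
          _ ≤ (|f z - f w| ^ p / |z - w| ^ (1 + s * p)) * h ^ (1 + s * p) :=
              mul_le_mul_of_nonneg_left hmono (by positivity)
          _ = h ^ (1 + s * p) * (|f z - f w| ^ p / |z - w| ^ (1 + s * p)) := mul_comm _ _
      calc ENNReal.ofReal (|f z - f w| ^ p)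
          ≤ ENNReal.ofReal (h ^ (1 + s * p) *
              (|f z - f w| ^ p / |z - w| ^ (1 + s * p))) := ENNReal.ofReal_le_ofReal hle
        _ = ENNReal.ofReal (h ^ (1 + s * p)) * ker s p f (z, w) := by
            rw [ENNReal.ofReal_mul (by positivity)]; rfl
  have hDbound : ∫⁻ q in J ×ˢ J', ENNReal.ofReal |f q.1 - f q.2| ^ p ≤
      ENNReal.ofReal (h ^ (1 + s * p)) * Dq := by
    calc ∫⁻ q in J ×ˢ J', ENNReal.ofReal |f q.1 - f q.2| ^ p
        ≤ ∫⁻ q in J ×ˢ J', ENNReal.ofReal (h ^ (1 + s * p)) * ker s p f q :=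
          setLIntegral_mono ((measurable_ker hs1 hp hf).const_mul _) hpoint
      _ = ENNReal.ofReal (h ^ (1 + s * p)) * ∫⁻ q in J ×ˢ J', ker s p f q :=
          lintegral_const_mul _ (measurable_ker hs1 hp hf)
      _ ≤ ENNReal.ofReal (h ^ (1 + s * p)) * Dq :=
          mul_le_mul_right (lintegral_mono_set (prod_mono hJS (hJ'J.trans hJS))) _
  -- assemble the ℝ≥0∞ bound
  have hRHSne : (ENNReal.ofReal (h ^ (1 + s * p)) * Dq) ^ (1 / p) *
      (ENNReal.ofReal h * ENNReal.ofReal (h / 2)) ^ (1 / q') ≠ ⊤ := by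
    apply ENNReal.mul_ne_top
    · exact (ENNReal.rpow_lt_top_of_nonneg (by positivity)
        (ENNReal.mul_ne_top ENNReal.ofReal_ne_top hD)).ne
    · exact (ENNReal.rpow_lt_top_of_nonneg hq'0
        (ENNReal.mul_ne_top ENNReal.ofReal_ne_top ENNReal.ofReal_ne_top)).ne
  have hL : (∫⁻ q in J ×ˢ J', ENNReal.ofReal |f q.1 - f q.2|) ≤
      (ENNReal.ofReal (h ^ (1 + s * p)) * Dq) ^ (1 / p) *
        (ENNReal.ofReal h * ENNReal.ofReal (h / 2)) ^ (1 / q') := by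
    rw [mJJ'] at holder
    refine le_trans holder ?_
    exact mul_le_mul_left
      (ENNReal.rpow_le_rpow (z := 1 / p) hDbound (by positivity)) _
  have hLreal : ∫ q in J ×ˢ J', |f q.1 - f q.2| ≤
      (h ^ (1 + s * p) * D) ^ (1 / p) * (h * (h / 2)) ^ (1 / q') := by
    rw [hconv]
    have := ENNReal.toReal_mono hRHSne hL
    refine le_trans this (le_of_eq ?_)
    rw [ENNReal.toReal_mul, ← ENNReal.toReal_rpow, ← ENNReal.toReal_rpow,
      ENNReal.toReal_mul, ENNReal.toReal_mul, ENNReal.toReal_ofReal (by positivity),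
      ENNReal.toReal_ofReal h0.le, ENNReal.toReal_ofReal h2.le, ← hDdef]
  -- final real computation
  calc (h * (h / 2))⁻¹ * |∫ q in J ×ˢ J', (f q.1 - f q.2)|
      ≤ (h * (h / 2))⁻¹ * ((h ^ (1 + s * p) * D) ^ (1 / p) * (h * (h / 2)) ^ (1 / q')) := by
        apply mul_le_mul_of_nonneg_left (le_trans habs hLreal) (by positivity)
    _ ≤ (h * (h / 2))⁻¹ * ((h ^ (1 + s * p) * D) ^ (1 / p) * (h * h) ^ (1 / q')) := by
        apply mul_le_mul_of_nonneg_left _ (by positivity)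
        apply mul_le_mul_of_nonneg_left _ (by positivity)
        exact Real.rpow_le_rpow (by positivity) (by nlinarith) hq'0
    _ = 2 * h ^ (s - 1 / p) * D ^ (1 / p) := by
        have h1 : (h ^ (1 + s * p) * D) ^ (1 / p) =
            h ^ ((1 + s * p) * (1 / p)) * D ^ (1 / p) := by
          rw [Real.mul_rpow (by positivity) hD0, ← Real.rpow_mul h0.le]
        have h2 : (h * h) ^ (1 / q') = h ^ (1 - 1/p) * h ^ (1 - 1/p) := by
          rw [hq', Real.mul_rpow h0.le h0.le]
        have e : (h * (h / 2))⁻¹ = 2 * h ^ (-2 : ℝ) := by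
          rw [show (-2:ℝ) = (-1) + (-1) by norm_num, Real.rpow_add h0,
            Real.rpow_neg_one]
          field_simp

        rw [h1, h2, e]
        have comb : ∀ x y : ℝ, h ^ x * h ^ y = h ^ (x + y) :=
          fun x y => (Real.rpow_add h0 x y).symm
        calc 2 * h ^ (-2:ℝ) * (h ^ ((1 + s * p) * (1 / p)) * D ^ (1 / p) *
              (h ^ (1 - 1/p) * h ^ (1 - 1/p)))
            = 2 * (h ^ (-2:ℝ) * (h ^ ((1 + s * p) * (1 / p)) *
                (h ^ (1 - 1/p) * h ^ (1 - 1/p)))) * D ^ (1 / p) := by ring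
          _ = 2 * h ^ ((-2) + ((1 + s * p) * (1 / p) + ((1 - 1/p) + (1 - 1/p)))) *
                D ^ (1 / p) := by rw [comb, comb, comb]
          _ = 2 * h ^ (s - 1 / p) * D ^ (1 / p) := by
                have hexp : (-2:ℝ) + ((1 + s * p) * (1 / p) + ((1 - 1/p) + (1 - 1/p)))
                    = s - 1 / p := by field_simp; ring
                rw [hexp]

/-- One-sided estimate: value at the left endpoint versus the average. -/
lemma onesided (hs1 : 0 < s) (hp : 1 < p) (hsp : 1 < s * p) {f : ℝ → ℝ} (hf : Continuous f)
    {a b : ℝ} (hab : a < b)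
    (hD : ∫⁻ q in Ioo a b ×ˢ Ioo a b, ker s p f q ≠ ⊤) :
    |f a - (b - a)⁻¹ * ∫ t in Ioo a b, f t| ≤
      (2 / (1 - 2 ^ (-(s - 1 / p)))) * (b - a) ^ (s - 1 / p) *
        ((∫⁻ q in Ioo a b ×ˢ Ioo a b, ker s p f q).toReal) ^ (1 / p) := by
  have hp0 : 0 < p := lt_trans one_pos hp
  have hba : (0:ℝ) < b - a := sub_pos.mpr hab
  set θ := s - 1 / p with hθdef
  have hθ : 0 < θ := by
    rw [hθdef, sub_pos, div_lt_iff₀ hp0]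
    linarith
  set ρ : ℝ := 2 ^ (-θ) with hρdef
  have hρ0 : 0 < ρ := Real.rpow_pos_of_pos two_pos _
  have hρ1 : ρ < 1 := Real.rpow_lt_one_of_one_lt_of_neg one_lt_two (by linarith)
  set D := (∫⁻ q in Ioo a b ×ˢ Ioo a b, ker s p f q).toReal with hDdef
  have hD0 : 0 ≤ D := ENNReal.toReal_nonneg
  set c := 2 * (b - a) ^ θ * D ^ (1 / p) with hcdef
  have hc0 : 0 ≤ c := by positivity
  set hs : ℕ → ℝ := fun n => (b - a) / 2 ^ n with hsdef
  have hh0 : ∀ n, 0 < hs n := fun n => by positivity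
  have hhb : ∀ n, a + hs n ≤ b := by
    intro n
    have h1 : (1:ℝ) ≤ 2 ^ n := one_le_pow₀ one_le_two
    have : hs n ≤ b - a := by
      rw [hsdef]
      calc (b - a) / 2 ^ n ≤ (b - a) / 1 := by
            apply div_le_div_of_nonneg_left hba.le one_pos h1
        _ = b - a := div_one _
    linarith
  set A : ℕ → ℝ := fun n => (hs n)⁻¹ * ∫ t in Ioo a (a + hs n), f t with hAdef
  -- step estimate
  have hstep : ∀ n, |A n - A (n + 1)| ≤ c * ρ ^ n := by
    intro n
    have hc' := core hs1 hp hsp hf (hh0 n) (hhb n) hD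
    have hnext : hs (n + 1) = hs n / 2 := by
      rw [hsdef]
      simp only [pow_succ]
      field_simp
    have hpow : (hs n) ^ θ = (b - a) ^ θ * ρ ^ n := by
      rw [hsdef]
      simp only
      rw [Real.div_rpow hba.le (by positivity), div_eq_mul_inv]
      congr 1
      rw [hρdef, ← Real.rpow_natCast ((2:ℝ) ^ (-θ)) n, ← Real.rpow_natCast (2:ℝ) n,
        ← Real.rpow_mul (by norm_num : (0:ℝ) ≤ 2),
        ← Real.rpow_mul (by norm_num : (0:ℝ) ≤ 2),
        ← Real.rpow_neg (by norm_num : (0:ℝ) ≤ 2)]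
      congr 1
      ring
    calc |A n - A (n + 1)| =
        |(hs n)⁻¹ * (∫ t in Ioo a (a + hs n), f t) -
          (hs n / 2)⁻¹ * ∫ t in Ioo a (a + hs n / 2), f t| := by
          rw [hAdef]; simp only; rw [hnext]
      _ ≤ 2 * (hs n) ^ θ * D ^ (1 / p) := hc'
      _ = c * ρ ^ n := by rw [hpow, hcdef]; ring
  -- telescoping
  have htel : ∀ n, |A 0 - A n| ≤ c * (1 - ρ)⁻¹ := by
    intro n
    have h1 : dist (A 0) (A n) ≤ ∑ i ∈ Finset.range n, dist (A i) (A (i + 1)) :=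
      dist_le_range_sum_dist A n
    have h2 : ∑ i ∈ Finset.range n, dist (A i) (A (i + 1)) ≤
        ∑ i ∈ Finset.range n, c * ρ ^ i := by
      apply Finset.sum_le_sum
      intro i _
      rw [Real.dist_eq]
      exact hstep i
    have h3 : ∑ i ∈ Finset.range n, c * ρ ^ i ≤ c * (1 - ρ)⁻¹ := by
      rw [← Finset.mul_sum]
      apply mul_le_mul_of_nonneg_left _ hc0
      calc ∑ i ∈ Finset.range n, ρ ^ i ≤ ∑' i : ℕ, ρ ^ i := by
            apply Summable.sum_le_tsum _ (fun i _ => by positivity)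
            exact summable_geometric_of_lt_one hρ0.le hρ1
        _ = (1 - ρ)⁻¹ := tsum_geometric_of_lt_one hρ0.le hρ1
    calc |A 0 - A n| = dist (A 0) (A n) := (Real.dist_eq _ _).symm
      _ ≤ _ := le_trans h1 (le_trans h2 h3)
  -- the averages converge to f a
  have hlim : Tendsto A atTop (𝓝 (f a)) := by
    rw [Metric.tendsto_atTop]
    intro ε hε
    obtain ⟨δ, hδ0, hδ⟩ := Metric.continuousAt_iff.mp (hf.continuousAt (x := a)) (ε / 2) (half_pos hε)
    obtain ⟨N, hN⟩ := pow_unbounded_of_one_lt ((b - a) / δ) one_lt_two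
    refine ⟨N, fun n hn => ?_⟩
    have h2n : (b - a) / δ < 2 ^ n :=
      lt_of_lt_of_le hN (pow_le_pow_right₀ one_le_two hn)
    have hlt : hs n < δ := by
      rw [hsdef]
      simp only
      rw [div_lt_iff₀ (by positivity : (0:ℝ) < 2 ^ n)]
      rw [div_lt_iff₀ hδ0] at h2n
      linarith [mul_comm δ ((2:ℝ) ^ n)]
    have hmeas : volume (Ioo a (a + hs n)) = ENNReal.ofReal (hs n) := by simp
    have hintf : IntegrableOn f (Ioo a (a + hs n)) volume :=
      hf.integrableOn_Icc.mono_set Ioo_subset_Icc_self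
    have hA : A n - f a = (hs n)⁻¹ * ∫ t in Ioo a (a + hs n), (f t - f a) := by
      rw [integral_sub hintf ((integrableOn_const_iff (C := f a)).mpr (Or.inr (by rw [hmeas]; exact
        ENNReal.ofReal_lt_top)))]
      rw [setIntegral_const, measureReal_def, hmeas, ENNReal.toReal_ofReal (hh0 n).le, smul_eq_mul,
        hAdef]
      simp only
      have : (hs n)⁻¹ * hs n = 1 := inv_mul_cancel₀ (hh0 n).ne'
      field_simp [(hh0 n).ne']
    have hbound : ‖∫ t in Ioo a (a + hs n), (f t - f a)‖ ≤
        (ε / 2) * (volume (Ioo a (a + hs n))).toReal := by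
      apply norm_setIntegral_le_of_norm_le_const
      · rw [hmeas]; exact ENNReal.ofReal_lt_top
      · intro t ht
        rw [Real.norm_eq_abs, ← Real.dist_eq]
        apply le_of_lt
        apply hδ
        rw [Real.dist_eq, abs_of_pos (by linarith [ht.1] : (0:ℝ) < t - a)]
        have := ht.2
        linarith
    rw [Real.dist_eq, hA, abs_mul, abs_inv, abs_of_pos (hh0 n)]
    rw [hmeas, ENNReal.toReal_ofReal (hh0 n).le] at hbound
    rw [Real.norm_eq_abs] at hbound
    calc (hs n)⁻¹ * |∫ t in Ioo a (a + hs n), (f t - f a)|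
        ≤ (hs n)⁻¹ * (ε / 2 * hs n) :=
          mul_le_mul_of_nonneg_left hbound (by positivity)
      _ = ε / 2 := by field_simp [(hh0 n).ne']
      _ < ε := by linarith
  -- conclude
  have h1 : Tendsto (fun n => |A 0 - A n|) atTop (𝓝 |A 0 - f a|) :=
    ((tendsto_const_nhds.sub hlim).abs)
  have h2 : |A 0 - f a| ≤ c * (1 - ρ)⁻¹ := le_of_tendsto' h1 htel
  have hA0 : A 0 = (b - a)⁻¹ * ∫ t in Ioo a b, f t := by
    rw [hAdef]
    simp only [hsdef]
    norm_num
  rw [abs_sub_comm, hA0] at h2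
  calc |f a - (b - a)⁻¹ * ∫ t in Ioo a b, f t| ≤ c * (1 - ρ)⁻¹ := h2
    _ = 2 / (1 - ρ) * (b - a) ^ θ * D ^ (1 / p) := by
        rw [hcdef, div_eq_mul_inv]; ring

/-- Morrey-type pointwise estimate from the localized Gagliardo energy. -/
lemma morrey (hs1 : 0 < s) (hp : 1 < p) (hsp : 1 < s * p) {v : ℝ → ℝ} (hv : Continuous v)
    {x y : ℝ} (hxy : x < y)
    (hD : ∫⁻ q in Ioo x y ×ˢ Ioo x y, ker s p v q ≠ ⊤) :
    |v x - v y| ≤ (2 * (2 / (1 - 2 ^ (-(s - 1 / p))))) * (y - x) ^ (s - 1 / p) *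
      ((∫⁻ q in Ioo x y ×ˢ Ioo x y, ker s p v q).toReal) ^ (1 / p) := by
  have h1 := onesided hs1 hp hsp hv hxy hD
  set g : ℝ → ℝ := fun t => v (x + y - t) with hgdef
  have hg : Continuous g := hv.comp (continuous_const.sub continuous_id)
  have hrefl_ker : ∀ q : ℝ × ℝ, ker s p g q = ker s p v (x + y - q.1, x + y - q.2) := by
    intro q
    unfold ker
    simp only [hgdef]
    have : (x + y - q.1) - (x + y - q.2) = -(q.1 - q.2) := by ring
    rw [this, abs_neg]
  have hmp1 : MeasurePreserving (fun t : ℝ => x + y - t) volume volume := by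
    have : (fun t : ℝ => x + y - t) = (fun t : ℝ => (x + y) + t) ∘ fun t : ℝ => -t := by
      funext t; simp [sub_eq_add_neg]
    rw [this]
    exact (measurePreserving_add_left volume (x + y)).comp
      (Measure.measurePreserving_neg volume)
  have hmp : MeasurePreserving (fun q : ℝ × ℝ => (x + y - q.1, x + y - q.2))
      volume volume := by
    rw [Measure.volume_eq_prod ℝ ℝ]
    exact hmp1.prod hmp1
  have hpre : (fun q : ℝ × ℝ => (x + y - q.1, x + y - q.2)) ⁻¹' (Ioo x y ×ˢ Ioo x y) =
      Ioo x y ×ˢ Ioo x y := by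
    ext q
    simp only [mem_preimage, prodMk_mem_set_prod_eq, mem_Ioo, mem_prod]
    constructor
    · rintro ⟨⟨u1, u2⟩, u3, u4⟩
      exact ⟨⟨by linarith, by linarith⟩, by linarith, by linarith⟩
    · rintro ⟨⟨u1, u2⟩, u3, u4⟩
      exact ⟨⟨by linarith, by linarith⟩, by linarith, by linarith⟩
  have hDg : ∫⁻ q in Ioo x y ×ˢ Ioo x y, ker s p g q =
      ∫⁻ q in Ioo x y ×ˢ Ioo x y, ker s p v q := by
    calc ∫⁻ q in Ioo x y ×ˢ Ioo x y, ker s p g q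
        = ∫⁻ q in Ioo x y ×ˢ Ioo x y, ker s p v (x + y - q.1, x + y - q.2) :=
          lintegral_congr fun q => hrefl_ker q
      _ = ∫⁻ q in Ioo x y ×ˢ Ioo x y, ker s p v q := by
          conv_lhs => rw [← hpre]
          exact hmp.setLIntegral_comp_preimage
            (measurableSet_Ioo.prod measurableSet_Ioo) (measurable_ker hs1 hp hv)
  have h2 := onesided hs1 hp hsp hg hxy (by rw [hDg]; exact hD)
  have hgx : g x = v y := by simp [hgdef]
  have havg : (∫ t in Ioo x y, g t) = ∫ t in Ioo x y, v t := by
    rw [← integral_Ioc_eq_integral_Ioo, ← integral_Ioc_eq_integral_Ioo,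
      ← intervalIntegral.integral_of_le hxy.le, ← intervalIntegral.integral_of_le hxy.le]
    have h3 := intervalIntegral.integral_comp_sub_left (a := x) (b := y) v (x + y)
    have e1 : x + y - y = x := by ring
    have e2 : x + y - x = y := by ring
    rw [e1, e2] at h3
    simp only [hgdef]
    exact h3
  rw [hgx, havg, hDg] at h2
  calc |v x - v y|
      ≤ |v x - (y - x)⁻¹ * ∫ t in Ioo x y, v t| +
        |(y - x)⁻¹ * (∫ t in Ioo x y, v t) - v y| :=
        abs_sub_le _ _ _
    _ = |v x - (y - x)⁻¹ * ∫ t in Ioo x y, v t| +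
        |v y - (y - x)⁻¹ * ∫ t in Ioo x y, v t| := by
        rw [abs_sub_comm ((y - x)⁻¹ * ∫ t in Ioo x y, v t) (v y)]
    _ ≤ (2 / (1 - 2 ^ (-(s - 1 / p)))) * (y - x) ^ (s - 1 / p) *
          ((∫⁻ q in Ioo x y ×ˢ Ioo x y, ker s p v q).toReal) ^ (1 / p) +
        (2 / (1 - 2 ^ (-(s - 1 / p)))) * (y - x) ^ (s - 1 / p) *
          ((∫⁻ q in Ioo x y ×ˢ Ioo x y, ker s p v q).toReal) ^ (1 / p) :=
        add_le_add h1 h2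
    _ = (2 * (2 / (1 - 2 ^ (-(s - 1 / p))))) * (y - x) ^ (s - 1 / p) *
          ((∫⁻ q in Ioo x y ×ˢ Ioo x y, ker s p v q).toReal) ^ (1 / p) := by ring

end FracAC

/-- The continuous representative of u ∈ W^{s,p}(ℝ) with sp > 1 is
(sp−1, p)-absolutely continuous. -/
theorem fractional_absolute_continuity
    {s p : ℝ} (hs1 : 0 < s) (hs2 : s < 1) (hp : 1 < p) (hsp : 1 < s * p)
    (u : ℝ → ℝ) (hu1 : MemLp u (ENNReal.ofReal p) volume) (hu2 : gagliardo1 s p u < ⊤)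
    (v : ℝ → ℝ) (hv : Continuous v) (hvu : v =ᵐ[volume] u) :
    ∀ ε : ℝ, 0 < ε → ∃ δ : ℝ, 0 < δ ∧
      ∀ a b : ℕ → ℝ, (∀ i, a i ≤ b i) →
        (Pairwise fun i j => Disjoint (Set.Ioo (a i) (b i)) (Set.Ioo (a j) (b j))) →
        (∑' i, ENNReal.ofReal (b i - a i)) < ENNReal.ofReal δ →
        (∑' i, ⨆ x ∈ Set.Ioo (a i) (b i), ⨆ y ∈ Set.Ioo (a i) (b i),
            ENNReal.ofReal (|v x - v y| ^ p / |x - y| ^ (s * p - 1)))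
          < ENNReal.ofReal ε := by
  intro ε hε
  have hp0 : 0 < p := lt_trans one_pos hp
  have hθ : 0 < s - 1 / p := by
    rw [sub_pos, div_lt_iff₀ hp0]; linarith
  have hρ1 : (2:ℝ) ^ (-(s - 1 / p)) < 1 :=
    Real.rpow_lt_one_of_one_lt_of_neg one_lt_two (by linarith)
  have hρ0 : (0:ℝ) < 2 ^ (-(s - 1 / p)) := Real.rpow_pos_of_pos two_pos _
  set M : ℝ := 2 * (2 / (1 - 2 ^ (-(s - 1 / p)))) with hMdef
  have hM : 0 < M := mul_pos two_pos (div_pos two_pos (by linarith))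
  set C0 : ℝ := M ^ p with hC0def
  have hC0 : 0 < C0 := Real.rpow_pos_of_pos hM p
  have hGm : Measurable (FracAC.ker s p v) := FracAC.measurable_ker hs1 hp hv
  -- total finiteness
  have hiter : (∫⁻ x : ℝ, ∫⁻ y : ℝ,
      ENNReal.ofReal (|v x - v y| ^ p / |x - y| ^ (1 + s * p))) =
      ∫⁻ x : ℝ, ∫⁻ y : ℝ, ENNReal.ofReal (‖u x - u y‖ ^ p / |x - y| ^ (1 + s * p)) := by
    apply lintegral_congr_ae
    filter_upwards [hvu] with x hx
    apply lintegral_congr_ae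
    filter_upwards [hvu] with y hy
    rw [hx, hy, Real.norm_eq_abs]
  have hprod : (∫⁻ q : ℝ × ℝ, FracAC.ker s p v q) =
      ∫⁻ x : ℝ, ∫⁻ y : ℝ, ENNReal.ofReal (|v x - v y| ^ p / |x - y| ^ (1 + s * p)) := by
    rw [Measure.volume_eq_prod ℝ ℝ, lintegral_prod _ hGm.aemeasurable]
    rfl
  have htot : (∫⁻ q : ℝ × ℝ, FracAC.ker s p v q) ≠ ⊤ := by
    rw [hprod, hiter]
    have h1 : ((∫⁻ x : ℝ, ∫⁻ y : ℝ,
        ENNReal.ofReal (‖u x - u y‖ ^ p / |x - y| ^ (1 + s * p))) ^ (1 / p)) < ⊤ := hu2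
    rw [ENNReal.rpow_lt_top_iff_of_pos (by positivity)] at h1
    exact h1.ne
  -- absolute continuity of the lintegral
  have hεC : (0:ℝ) < ε / (2 * C0) := by positivity
  obtain ⟨δ', hδ'0, hδ'⟩ := exists_pos_setLIntegral_lt_of_measure_lt htot
    (ε := ENNReal.ofReal (ε / (2 * C0))) (ENNReal.ofReal_pos.mpr hεC).ne'
  obtain ⟨w, hw0, hwδ⟩ := exists_between hδ'0
  have hwtop : w ≠ ⊤ := (hwδ.trans_le le_top).ne
  set r := w.toReal with hrdef
  have hr0 : 0 < r := ENNReal.toReal_pos hw0.ne' hwtop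
  have hwr : ENNReal.ofReal r = w := ENNReal.ofReal_toReal hwtop
  refine ⟨min 1 r, lt_min one_pos hr0, ?_⟩
  intro a b hab hdisj hsum
  set sq : ℕ → Set (ℝ × ℝ) := fun i => Ioo (a i) (b i) ×ˢ Ioo (a i) (b i) with hsqdef
  have hsqm : ∀ i, MeasurableSet (sq i) := fun i =>
    measurableSet_Ioo.prod measurableSet_Ioo
  have hsqd : Pairwise (Function.onFun Disjoint sq) := fun i j hij =>
    Disjoint.set_prod_left (hdisj hij) _ _
  -- the union of squares has small measure
  have hvolU : volume (⋃ i, sq i) < δ' := by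
    have h1 : ∀ i, volume (sq i) ≤ ENNReal.ofReal (min 1 r) * ENNReal.ofReal (b i - a i) := by
      intro i
      have : volume (sq i) = ENNReal.ofReal (b i - a i) * ENNReal.ofReal (b i - a i) := by
        rw [hsqdef]
        simp only
        rw [Measure.volume_eq_prod ℝ ℝ, Measure.prod_prod, Real.volume_Ioo]
      rw [this]
      apply mul_le_mul_left
      exact le_of_lt (lt_of_le_of_lt (ENNReal.le_tsum i) hsum)
    calc volume (⋃ i, sq i) ≤ ∑' i, volume (sq i) := measure_iUnion_le _
      _ ≤ ∑' i, ENNReal.ofReal (min 1 r) * ENNReal.ofReal (b i - a i) :=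
          ENNReal.tsum_le_tsum h1
      _ = ENNReal.ofReal (min 1 r) * ∑' i, ENNReal.ofReal (b i - a i) :=
          ENNReal.tsum_mul_left
      _ ≤ ENNReal.ofReal (min 1 r) * ENNReal.ofReal (min 1 r) :=
          mul_le_mul_right hsum.le _
      _ = ENNReal.ofReal (min 1 r * min 1 r) :=
          (ENNReal.ofReal_mul (le_min zero_le_one hr0.le)).symm
      _ ≤ ENNReal.ofReal r := by
          apply ENNReal.ofReal_le_ofReal
          calc min 1 r * min 1 r ≤ 1 * r :=
              mul_le_mul (min_le_left _ _) (min_le_right _ _)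
                (le_min zero_le_one hr0.le) zero_le_one
            _ = r := one_mul r
      _ = w := hwr
      _ < δ' := hwδ
  have hI := hδ' _ hvolU
  -- bound each supremum by the local energy
  have key : ∀ i, ∀ x' y' : ℝ, x' < y' → x' ∈ Ioo (a i) (b i) → y' ∈ Ioo (a i) (b i) →
      ENNReal.ofReal (|v x' - v y'| ^ p / |x' - y'| ^ (s * p - 1)) ≤
        ENNReal.ofReal C0 * ∫⁻ q in sq i, FracAC.ker s p v q := by
    intro i x' y' hxy hx hy
    have hsub : Ioo x' y' ⊆ Ioo (a i) (b i) := Ioo_subset_Ioo hx.1.le hy.2.le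
    have hDne : (∫⁻ q in Ioo x' y' ×ˢ Ioo x' y', FracAC.ker s p v q) ≠ ⊤ :=
      ne_top_of_le_ne_top htot (setLIntegral_le_lintegral _ _)
    have hMor := FracAC.morrey hs1 hp hsp hv hxy hDne
    set E := (∫⁻ q in Ioo x' y' ×ˢ Ioo x' y', FracAC.ker s p v q).toReal with hEdef
    have hE0 : 0 ≤ E := ENNReal.toReal_nonneg
    have hyx0 : (0:ℝ) < y' - x' := sub_pos.mpr hxy
    have hpowp : (M * (y' - x') ^ (s - 1 / p) * E ^ (1 / p)) ^ p =
        C0 * ((y' - x') ^ (s * p - 1) * E) := by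
      rw [Real.mul_rpow (by positivity) (by positivity),
        Real.mul_rpow hM.le (by positivity),
        ← Real.rpow_mul hyx0.le, ← Real.rpow_mul hE0]
      rw [one_div_mul_cancel hp0.ne', Real.rpow_one]
      have : (s - 1 / p) * p = s * p - 1 := by field_simp
      rw [this, hC0def]
      ring
    have h2 : |v x' - v y'| ^ p ≤ C0 * ((y' - x') ^ (s * p - 1) * E) := by
      rw [← hpowp]
      exact Real.rpow_le_rpow (abs_nonneg _) hMor hp0.le
    have h3 : |v x' - v y'| ^ p / |x' - y'| ^ (s * p - 1) ≤ C0 * E := by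
      rw [abs_of_neg (by linarith : x' - y' < 0), neg_sub]
      rw [div_le_iff₀ (by positivity : (0:ℝ) < (y' - x') ^ (s * p - 1))]
      calc |v x' - v y'| ^ p ≤ C0 * ((y' - x') ^ (s * p - 1) * E) := h2
        _ = C0 * E * (y' - x') ^ (s * p - 1) := by ring
    calc ENNReal.ofReal (|v x' - v y'| ^ p / |x' - y'| ^ (s * p - 1))
        ≤ ENNReal.ofReal (C0 * E) := ENNReal.ofReal_le_ofReal h3
      _ = ENNReal.ofReal C0 * ENNReal.ofReal E := ENNReal.ofReal_mul hC0.le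
      _ = ENNReal.ofReal C0 * ∫⁻ q in Ioo x' y' ×ˢ Ioo x' y', FracAC.ker s p v q := by
          rw [hEdef, ENNReal.ofReal_toReal hDne]
      _ ≤ ENNReal.ofReal C0 * ∫⁻ q in sq i, FracAC.ker s p v q :=
          mul_le_mul_right (lintegral_mono_set (prod_mono hsub hsub)) _
  have hSle : ∀ i, (⨆ x ∈ Set.Ioo (a i) (b i), ⨆ y ∈ Set.Ioo (a i) (b i),
      ENNReal.ofReal (|v x - v y| ^ p / |x - y| ^ (s * p - 1))) ≤
        ENNReal.ofReal C0 * ∫⁻ q in sq i, FracAC.ker s p v q := by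
    intro i
    apply iSup₂_le; intro x hx
    apply iSup₂_le; intro y hy
    rcases lt_trichotomy x y with hxy | rfl | hyx
    · exact key i x y hxy hx hy
    · have : |x - x| ^ (s * p - 1) = 0 := by
        rw [sub_self, abs_zero, Real.zero_rpow (by linarith : s * p - 1 ≠ 0)]
      rw [this, div_zero, ENNReal.ofReal_zero]
      exact zero_le
    · rw [abs_sub_comm (v x) (v y), abs_sub_comm x y]
      exact key i y x hyx hy hx
  -- conclude
  calc (∑' i, ⨆ x ∈ Set.Ioo (a i) (b i), ⨆ y ∈ Set.Ioo (a i) (b i),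
      ENNReal.ofReal (|v x - v y| ^ p / |x - y| ^ (s * p - 1)))
      ≤ ∑' i, ENNReal.ofReal C0 * ∫⁻ q in sq i, FracAC.ker s p v q :=
        ENNReal.tsum_le_tsum hSle
    _ = ENNReal.ofReal C0 * ∑' i, ∫⁻ q in sq i, FracAC.ker s p v q :=
        ENNReal.tsum_mul_left
    _ = ENNReal.ofReal C0 * ∫⁻ q in ⋃ i, sq i, FracAC.ker s p v q := by
        rw [lintegral_iUnion hsqm hsqd]
    _ ≤ ENNReal.ofReal C0 * ENNReal.ofReal (ε / (2 * C0)) :=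
        mul_le_mul_right hI.le _
    _ = ENNReal.ofReal (C0 * (ε / (2 * C0))) :=
        (ENNReal.ofReal_mul hC0.le).symm
    _ = ENNReal.ofReal (ε / 2) := by
        congr 1
        field_simp
    _ < ENNReal.ofReal ε := by
        rw [ENNReal.ofReal_lt_ofReal_iff hε]
        linarith
end
end
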